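/- arXiv:2012.12953 — 3 statements merged into one kernel-verified Lean document; each statement's English description precedes it below -/
import Mathlib

section
/- Let H be a self-adjoint operator on a Hilbert space with smallest eigenvalue 0, eigenprojection P(0) of dimension N, and spectral gap ΔE > 0 (i.e., the spectrum of H is contained in {0} ∪ [ΔE, ∞)). For q > 0 define ρ^q := (1/(N√(2πq))) ∫_{-∞}^{∞} exp(iHt) exp(-t²/(2q)) dt (in the weak sense via the spectral measure). Then ‖ρ^q − P₀‖ ≤ (1/N)·exp(−(ΔE)²q/2) in operator norm, where P₀ = (1/N)·P(0). -/
open MeasureTheory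
open scoped InnerProductSpace

variable {E : Type*} [NormedAddCommGroup E] [InnerProductSpace ℂ E] [CompleteSpace E]

/-- Norm bound for a symmetric operator from a quadratic-form bound. -/
lemma gsp_symm_norm_le {T : E →L[ℂ] E} (hT : LinearMap.IsSymmetric (T : E →ₗ[ℂ] E))
    {C : ℝ} (hC : 0 ≤ C) (hb : ∀ x : E, ‖⟪x, T x⟫_ℂ‖ ≤ C * ‖x‖ ^ 2) : ‖T‖ ≤ C := by
  refine T.opNorm_le_bound hC (fun x => ?_)
  rcases eq_or_ne (T x) 0 with h0 | h0
  · simp [h0, mul_nonneg hC (norm_nonneg x)]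
  have hx0 : x ≠ 0 := by rintro rfl; simp at h0
  have key : ∀ u v : E, ‖(⟪T u, v⟫_ℂ + ⟪T v, u⟫_ℂ)‖ ≤ C * (‖u‖ ^ 2 + ‖v‖ ^ 2) := by
    intro u v
    have e1 : ⟪T (u + v), u + v⟫_ℂ - ⟪T (u - v), u - v⟫_ℂ
        = 2 * (⟪T u, v⟫_ℂ + ⟪T v, u⟫_ℂ) := by
      simp only [map_add, map_sub, inner_add_left, inner_add_right, inner_sub_left,
        inner_sub_right]
      ring
    have b1 : ‖⟪T (u + v), u + v⟫_ℂ‖ ≤ C * ‖u + v‖ ^ 2 := by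
      rw [← inner_conj_symm, RCLike.norm_conj]; exact hb _
    have b2 : ‖⟪T (u - v), u - v⟫_ℂ‖ ≤ C * ‖u - v‖ ^ 2 := by
      rw [← inner_conj_symm, RCLike.norm_conj]; exact hb _
    have par := parallelogram_law_with_norm ℂ u v
    have : ‖2 * (⟪T u, v⟫_ℂ + ⟪T v, u⟫_ℂ)‖ ≤ C * ‖u + v‖ ^ 2 + C * ‖u - v‖ ^ 2 := by
      rw [← e1]; exact (norm_sub_le _ _).trans (add_le_add b1 b2)
    have h2 : ‖(2 : ℂ) * (⟪T u, v⟫_ℂ + ⟪T v, u⟫_ℂ)‖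
        = 2 * ‖(⟪T u, v⟫_ℂ + ⟪T v, u⟫_ℂ)‖ := by
      rw [norm_mul]; norm_num
    nlinarith [this, h2, norm_nonneg (⟪T u, v⟫_ℂ + ⟪T v, u⟫_ℂ)]
  have hTx : (0:ℝ) < ‖T x‖ := norm_pos_iff.mpr h0
  have hxpos : (0:ℝ) < ‖x‖ := norm_pos_iff.mpr hx0
  set y : E := (((‖x‖ / ‖T x‖ : ℝ) : ℂ)) • T x with hy
  have hyn : ‖y‖ = ‖x‖ := by
    rw [hy, norm_smul, Complex.norm_real, Real.norm_eq_abs, abs_of_nonneg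
      (div_nonneg (norm_nonneg x) (norm_nonneg _)), div_mul_cancel₀ _ (ne_of_gt hTx)]
  have hsum : ⟪T x, y⟫_ℂ + ⟪T y, x⟫_ℂ = ((2 * ‖x‖ * ‖T x‖ : ℝ) : ℂ) := by
    have hTy : ⟪T y, x⟫_ℂ = ⟪y, T x⟫_ℂ := hT y x
    rw [hTy, hy, inner_smul_right, inner_smul_left, inner_self_eq_norm_sq_to_K,
      Complex.conj_ofReal]
    have hne : (‖T x‖ : ℂ) ≠ 0 := by exact_mod_cast ne_of_gt hTx
    push_cast
    field_simp
    ring_nf; rfl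
  have hkey := key x y
  rw [hsum, hyn] at hkey
  have : ‖((2 * ‖x‖ * ‖T x‖ : ℝ) : ℂ)‖ = 2 * ‖x‖ * ‖T x‖ := by
    rw [Complex.norm_real, Real.norm_eq_abs, abs_of_nonneg]
    positivity
  rw [this] at hkey
  nlinarith [hkey, hxpos, hTx]

/-- Gaussian smoothing of the ground state projection. `Φ` encodes the Borel
functional calculus of a self-adjoint operator `H` (a unital star-algebra
homomorphism), `μ ψ = ⟨ψ, P(·)ψ⟩` its scalar spectral measures, supported in
`{0} ∪ [ΔE, ∞)` (spectral gap), `P₀ = (1/N)·P({0})` the normalized ground state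
projection with `N`-dimensional ground eigenspace. Then the Gaussian smoothing
`ρ^q = (1/(N√(2πq))) ∫ e^{iHt} e^{−t²/(2q)} dt` satisfies
`‖ρ^q − P₀‖ ≤ (1/N)·e^{−(ΔE)²q/2}`. -/
theorem gsp_gaussian_smoothing
    (Φ : (ℝ → ℂ) → (E →L[ℂ] E))
    (hadd : ∀ f g, Φ (f + g) = Φ f + Φ g)
    (hsmul : ∀ (c : ℂ) f, Φ (c • f) = c • Φ f)
    (hmul : ∀ f g, Φ (f * g) = Φ f * Φ g)
    (hstar : ∀ f, Φ (star f) = ContinuousLinearMap.adjoint (Φ f))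
    (hone : Φ 1 = 1)
    (μ : E → Measure ℝ)
    (hμfin : ∀ ψ, μ ψ Set.univ = ENNReal.ofReal (‖ψ‖ ^ 2))
    (hmeas : ∀ f : ℝ → ℂ, Measurable f → (∀ lam, ‖f lam‖ ≤ 1) →
      ∀ ψ : E, ⟪ψ, Φ f ψ⟫_ℂ = ∫ lam, f lam ∂(μ ψ))
    (ΔE : ℝ) (hΔE : 0 < ΔE)
    (hgap : ∀ ψ, μ ψ (({0} ∪ Set.Ici ΔE)ᶜ) = 0)
    (N : ℕ) (hN : 1 ≤ N)
    (P₀ : E →L[ℂ] E)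
    (hrank : Module.finrank ℂ
      (LinearMap.range (Φ (Set.indicator {(0 : ℝ)} 1)).toLinearMap) = N)
    (hP₀ : P₀ = ((N : ℂ))⁻¹ • Φ (Set.indicator {(0 : ℝ)} 1))
    (q : ℝ) (hq : 0 < q)
    (hInt : Integrable (fun t : ℝ =>
      Real.exp (-(t ^ 2) / (2 * q)) •
        Φ (fun lam => Complex.exp (Complex.I * lam * t))))
    (ρq : E →L[ℂ] E)
    (hρq : ρq = ((N : ℂ) * (Real.sqrt (2 * Real.pi * q) : ℂ))⁻¹ •
      ∫ t : ℝ, Real.exp (-(t ^ 2) / (2 * q)) •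
        Φ (fun lam => Complex.exp (Complex.I * lam * t))) :
    ‖ρq - P₀‖ ≤ (1 / (N : ℝ)) * Real.exp (-ΔE ^ 2 * q / 2) := by
  classical
  set C : ℝ := Real.exp (-ΔE ^ 2 * q / 2) with hC
  have hCpos : 0 < C := Real.exp_pos _
  set g : ℝ → ℂ := fun lam => ((Real.exp (-lam ^ 2 * q / 2) : ℝ) : ℂ) with hg
  set ind : ℝ → ℂ := Set.indicator {(0 : ℝ)} 1 with hind
  set h : ℝ → ℂ := fun lam => g lam - ind lam with hh
  have hNC : ((N : ℂ)) ≠ 0 := by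
    exact_mod_cast Nat.cast_ne_zero.mpr (by omega)
  have h2πq : (0:ℝ) < 2 * Real.pi * q := by positivity
  have hsqrt : (0:ℝ) < Real.sqrt (2 * Real.pi * q) := Real.sqrt_pos.mpr h2πq
  have hfin : ∀ ψ : E, IsFiniteMeasure (μ ψ) := fun ψ =>
    ⟨by rw [hμfin]; exact ENNReal.ofReal_lt_top⟩
  -- indicator facts
  have hind0 : ind 0 = 1 := by simp [hind]
  have hindne : ∀ lam : ℝ, lam ≠ 0 → ind lam = 0 := by
    intro lam hl; simp [hind, Set.indicator_apply, hl]
  have hind_meas : Measurable ind := by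
    exact measurable_one.indicator (measurableSet_singleton 0)
  have hind_bd : ∀ lam, ‖ind lam‖ ≤ 1 := by
    intro lam
    by_cases hl : lam = 0
    · subst hl; rw [hind0]; simp
    · rw [hindne lam hl]; simp
  have hg_bd : ∀ lam, ‖g lam‖ ≤ 1 := by
    intro lam
    simp only [hg, Complex.norm_real, Real.norm_eq_abs, Real.abs_exp]
    rw [Real.exp_le_one_iff]
    nlinarith [sq_nonneg lam]
  have hg_meas : Measurable g := by
    fun_prop
  have hh_meas : Measurable h := by
    exact hg_meas.sub hind_meas
  have hh_bd : ∀ lam, ‖h lam‖ ≤ 1 := by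
    intro lam
    by_cases hl : lam = 0
    · subst hl
      simp [hh, hg, hind0]
    · rw [hh]
      simp only [hindne lam hl, sub_zero]
      exact hg_bd lam
  -- the Gaussian Fourier integral
  have gauss : ∀ lam : ℝ,
      (∫ t : ℝ, ((Real.exp (-(t ^ 2) / (2 * q)) : ℝ) : ℂ) *
        Complex.exp (Complex.I * lam * t))
      = ((Real.sqrt (2 * Real.pi * q) : ℝ) : ℂ) * g lam := by
    intro lam
    have hb : (0:ℝ) < (2 * q)⁻¹ := by positivity
    have hbre : (0:ℂ).re < (((2 * q)⁻¹ : ℝ) : ℂ).re := by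
      simpa using hb
    have := fourierIntegral_gaussian (b := (((2 * q)⁻¹ : ℝ) : ℂ)) (by simpa using hb) (lam : ℂ)
    have heq : (fun t : ℝ => ((Real.exp (-(t ^ 2) / (2 * q)) : ℝ) : ℂ) *
        Complex.exp (Complex.I * lam * t))
        = fun t : ℝ => Complex.exp (Complex.I * (lam:ℂ) * (t:ℝ)) *
            Complex.exp (-(((2 * q)⁻¹ : ℝ) : ℂ) * (t:ℝ) ^ 2) := by
      funext t
      rw [mul_comm]
      congr 1
      rw [Complex.ofReal_exp]
      congr 1
      push_cast
      ring
    rw [heq, this]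
    have hq' : ((q : ℝ) : ℂ) ≠ 0 := by exact_mod_cast ne_of_gt hq
    have e2 : ((Real.pi : ℝ) : ℂ) / (((2 * q)⁻¹ : ℝ) : ℂ) = (((2 * Real.pi * q : ℝ)) : ℂ) := by
      push_cast
      field_simp
    have e3 : ((((2 * Real.pi * q : ℝ)) : ℂ)) ^ (1 / 2 : ℂ)
        = ((Real.sqrt (2 * Real.pi * q) : ℝ) : ℂ) := by
      rw [Real.sqrt_eq_rpow, Complex.ofReal_cpow (le_of_lt h2πq)]
      norm_num
    have e4 : -(lam:ℂ) ^ 2 / (4 * (((2 * q)⁻¹ : ℝ) : ℂ)) = (((-lam ^ 2 * q / 2 : ℝ)) : ℂ) := by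
      push_cast
      field_simp
      ring
    rw [e2, e3, e4, hg]
    congr 1
    exact (Complex.ofReal_exp _).symm
  -- quadratic form of ρq
  have hρψ : ∀ ψ : E, ⟪ψ, ρq ψ⟫_ℂ = (N : ℂ)⁻¹ * ∫ lam, g lam ∂(μ ψ) := by
    intro ψ
    haveI := hfin ψ
    rw [hρq, ContinuousLinearMap.smul_apply, inner_smul_right,
      ContinuousLinearMap.integral_apply hInt,
      ← integral_inner (hInt.apply_continuousLinearMap ψ)]
    have step1 : ∀ t : ℝ,
        ⟪ψ, (Real.exp (-(t ^ 2) / (2 * q)) •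
          Φ (fun lam => Complex.exp (Complex.I * lam * t))) ψ⟫_ℂ
        = ((Real.exp (-(t ^ 2) / (2 * q)) : ℝ) : ℂ) *
            ∫ lam, Complex.exp (Complex.I * lam * t) ∂(μ ψ) := by
      intro t
      rw [ContinuousLinearMap.smul_apply]
      have hsm : (Real.exp (-(t ^ 2) / (2 * q))) •
          (Φ (fun lam => Complex.exp (Complex.I * lam * t)) ψ)
          = ((Real.exp (-(t ^ 2) / (2 * q)) : ℝ) : ℂ) •
            (Φ (fun lam => Complex.exp (Complex.I * lam * t)) ψ) := by
        rw [← smul_one_smul ℂ (Real.exp (-(t ^ 2) / (2 * q)))]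
        norm_num
      rw [hsm, inner_smul_right]
      congr 1
      refine hmeas _ (by fun_prop) (fun lam => ?_) ψ
      rw [Complex.norm_exp]
      have : (Complex.I * lam * t).re = 0 := by simp
      rw [this, Real.exp_zero]
    rw [integral_congr_ae (Filter.Eventually.of_forall step1)]
    -- Fubini
    have hiprod : Integrable (Function.uncurry fun (t : ℝ) (lam : ℝ) =>
        ((Real.exp (-(t ^ 2) / (2 * q)) : ℝ) : ℂ) * Complex.exp (Complex.I * lam * t))
        (volume.prod (μ ψ)) := by
      have hbd : Integrable (fun p : ℝ × ℝ =>
          (Real.exp (-(p.1 ^ 2) / (2 * q))) * 1) (volume.prod (μ ψ)) := by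
        refine Integrable.mul_prod (L := ℝ)
          (f := fun t : ℝ => Real.exp (-(t ^ 2) / (2 * q)))
          (g := fun _ : ℝ => (1 : ℝ)) ?_ (integrable_const 1)
        have : (fun t : ℝ => Real.exp (-(t ^ 2) / (2 * q)))
            = fun t : ℝ => Real.exp (-(2*q)⁻¹ * t ^ 2) := by
          funext t; congr 1; field_simp
        rw [this]
        exact integrable_exp_neg_mul_sq (by positivity)
      refine hbd.mono' ?_ ?_
      · apply Continuous.aestronglyMeasurable
        fun_prop
      · refine Filter.Eventually.of_forall (fun p => ?_)
        simp only [Function.uncurry]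
        rw [norm_mul]
        have h1 : ‖Complex.exp (Complex.I * p.2 * p.1)‖ = 1 := by
          rw [Complex.norm_exp]
          have : (Complex.I * (p.2:ℝ) * (p.1:ℝ)).re = 0 := by simp
          rw [this, Real.exp_zero]
        rw [h1, mul_one, Complex.norm_real, Real.norm_eq_abs, Real.abs_exp, mul_one]
    have hswap : (∫ t : ℝ, ((Real.exp (-(t ^ 2) / (2 * q)) : ℝ) : ℂ) *
          ∫ lam, Complex.exp (Complex.I * lam * t) ∂(μ ψ))
        = ∫ lam, (∫ t : ℝ, ((Real.exp (-(t ^ 2) / (2 * q)) : ℝ) : ℂ) *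
            Complex.exp (Complex.I * lam * t)) ∂(μ ψ) := by
      calc (∫ t : ℝ, ((Real.exp (-(t ^ 2) / (2 * q)) : ℝ) : ℂ) *
            ∫ lam, Complex.exp (Complex.I * lam * t) ∂(μ ψ))
          = ∫ t : ℝ, ∫ lam, ((Real.exp (-(t ^ 2) / (2 * q)) : ℝ) : ℂ) *
              Complex.exp (Complex.I * lam * t) ∂(μ ψ) := by
            refine integral_congr_ae (Filter.Eventually.of_forall fun t => ?_)
            exact (integral_const_mul _ _).symm
        _ = _ := integral_integral_swap hiprod
    rw [hswap]
    rw [integral_congr_ae (Filter.Eventually.of_forall (fun lam => gauss lam))]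
    rw [integral_const_mul]
    have hs : ((Real.sqrt (2 * Real.pi * q) : ℝ) : ℂ) ≠ 0 := by
      exact_mod_cast ne_of_gt hsqrt
    rw [mul_inv, mul_assoc, inv_mul_cancel_left₀ hs]
  -- quadratic form of P₀
  have hP₀ψ : ∀ ψ : E, ⟪ψ, P₀ ψ⟫_ℂ = (N : ℂ)⁻¹ * ∫ lam, ind lam ∂(μ ψ) := by
    intro ψ
    rw [hP₀, ContinuousLinearMap.smul_apply, inner_smul_right]
    congr 1
    exact hmeas _ hind_meas hind_bd ψ
  -- quadratic form of Φ h
  have hΦhψ : ∀ ψ : E, ⟪ψ, Φ h ψ⟫_ℂ = ∫ lam, h lam ∂(μ ψ) :=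
    fun ψ => hmeas h hh_meas hh_bd ψ
  -- integrabilities
  have hint_g : ∀ ψ : E, Integrable g (μ ψ) := by
    intro ψ
    haveI := hfin ψ
    exact ⟨hg_meas.aestronglyMeasurable,
      HasFiniteIntegral.of_bounded (C := 1) (Filter.Eventually.of_forall hg_bd)⟩
  have hint_ind : ∀ ψ : E, Integrable ind (μ ψ) := by
    intro ψ
    haveI := hfin ψ
    exact ⟨hind_meas.aestronglyMeasurable,
      HasFiniteIntegral.of_bounded (C := 1) (Filter.Eventually.of_forall hind_bd)⟩
  -- operator identity
  have hop : ρq - P₀ = (N : ℂ)⁻¹ • Φ h := by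
    apply ContinuousLinearMap.coe_injective
    rw [← ext_inner_map]
    intro x
    have h1 : ⟪x, (ρq - P₀) x⟫_ℂ = ⟪x, ((N : ℂ)⁻¹ • Φ h) x⟫_ℂ := by
      rw [ContinuousLinearMap.sub_apply, inner_sub_right, hρψ, hP₀ψ,
        ContinuousLinearMap.smul_apply, inner_smul_right, hΦhψ]
      rw [hh]
      rw [integral_sub (hint_g x) (hint_ind x)]
      ring
    calc ⟪(((ρq - P₀) : E →L[ℂ] E) : E →ₗ[ℂ] E) x, x⟫_ℂ
        = (starRingEnd ℂ) ⟪x, (ρq - P₀) x⟫_ℂ := by rw [inner_conj_symm]; rfl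
      _ = (starRingEnd ℂ) ⟪x, ((N : ℂ)⁻¹ • Φ h) x⟫_ℂ := by rw [h1]
      _ = ⟪((((N : ℂ)⁻¹ • Φ h) : E →L[ℂ] E) : E →ₗ[ℂ] E) x, x⟫_ℂ := by
          rw [inner_conj_symm]; rfl
  -- Φ h is symmetric
  have hsymm : LinearMap.IsSymmetric ((Φ h : E →L[ℂ] E) : E →ₗ[ℂ] E) := by
    have hst : star h = h := by
      funext lam
      by_cases hl : lam = 0
      · subst hl
        simp [hh, hg, hind0, Pi.star_apply, RCLike.star_def]
      · simp only [Pi.star_apply, RCLike.star_def, hh, hindne lam hl, sub_zero, hg,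
          Complex.conj_ofReal]
    have hadj : ContinuousLinearMap.adjoint (Φ h) = Φ h := by
      rw [← hstar, hst]
    intro u v
    have := ContinuousLinearMap.adjoint_inner_left (Φ h) v u
    rw [hadj] at this
    exact this
  -- quadratic form bound for Φ h
  have hΦh_bd : ∀ x : E, ‖⟪x, Φ h x⟫_ℂ‖ ≤ C * ‖x‖ ^ 2 := by
    intro x
    haveI := hfin x
    rw [hΦhψ x]
    have hae : ∀ᵐ lam ∂(μ x), ‖h lam‖ ≤ C := by
      rw [MeasureTheory.ae_iff]
      refine measure_mono_null ?_ (hgap x)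
      intro lam hlam
      simp only [Set.mem_setOf_eq, not_le] at hlam
      simp only [Set.mem_compl_iff, Set.mem_union, Set.mem_singleton_iff, Set.mem_Ici]
      push_neg
      constructor
      · rintro rfl
        have : h 0 = 0 := by simp [hh, hg, hind0]
        rw [this] at hlam; simp at hlam
        exact absurd hlam (not_lt.mpr (le_of_lt hCpos))
      · by_contra hge'
        push_neg at hge'
        have hge : ΔE ≤ lam := hge'
        have hl0 : lam ≠ 0 := by intro hc; subst hc; linarith
        have : ‖h lam‖ = Real.exp (-lam ^ 2 * q / 2) := by
          rw [hh]
          simp only [hindne lam hl0, sub_zero, hg, Complex.norm_real, Real.norm_eq_abs,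
            Real.abs_exp]
        rw [this] at hlam
        have : Real.exp (-lam ^ 2 * q / 2) ≤ C := by
          rw [hC]
          apply Real.exp_le_exp.mpr
          nlinarith [mul_le_mul_of_nonneg_right
            (pow_le_pow_left₀ (le_of_lt hΔE) hge 2) (le_of_lt hq)]
        linarith
    calc ‖∫ lam, h lam ∂(μ x)‖ ≤ ∫ _, C ∂(μ x) :=
          norm_integral_le_of_norm_le (integrable_const C) hae
      _ = (μ x Set.univ).toReal * C := by rw [integral_const]; simp [smul_eq_mul, measureReal_def]
      _ = ‖x‖ ^ 2 * C := by rw [hμfin x, ENNReal.toReal_ofReal (by positivity)]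
      _ = C * ‖x‖ ^ 2 := by ring
  have hnorm : ‖Φ h‖ ≤ C := gsp_symm_norm_le hsymm (le_of_lt hCpos) hΦh_bd
  rw [hop, norm_smul]
  have : ‖((N : ℂ))⁻¹‖ = 1 / (N : ℝ) := by
    rw [norm_inv]
    simp
  rw [this]
  apply mul_le_mul_of_nonneg_left hnorm
  positivity
end

section
/- Let H be self-adjoint with Hψ₀ = 0 for a unit vector ψ₀, spectral gap ΔE > 0 (σ(H) ⊆ {0} ∪ [ΔE, ∞)), and let A be a bounded operator. Define Ã := (1/√(2πq)) ∫_ℝ e^{iHt} A e^{-iHt} e^{-t²/(2q)} dt (weakly). If ⟨ψ₀, Aψ₀⟩ = 0, then Ãψ₀ = ∫_{σ(H)∖{0}} e^{-λ²q/2} dP(λ) Aψ₀, where P is the spectral measure of H. -/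
open MeasureTheory Real
open scoped InnerProductSpace

set_option linter.unusedSectionVars false
set_option maxHeartbeats 1000000

noncomputable section

namespace HGAux

variable {E : Type*} [NormedAddCommGroup E] [InnerProductSpace ℂ E] [CompleteSpace E]


theorem phi_zero (Φ : (ℝ → ℂ) → (E →L[ℂ] E))
    (hadd : ∀ f g, Φ (f + g) = Φ f + Φ g) : Φ 0 = 0 := by
  have h := hadd 0 0
  rw [add_zero] at h
  exact (add_eq_right.mp h.symm)

theorem phi_sum (Φ : (ℝ → ℂ) → (E →L[ℂ] E))
    (hadd : ∀ f g, Φ (f + g) = Φ f + Φ g)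
    {ι : Type*} (s : Finset ι) (f : ι → (ℝ → ℂ)) :
    Φ (∑ j ∈ s, f j) = ∑ j ∈ s, Φ (f j) := by
  classical
  induction s using Finset.induction_on with
  | empty => simpa using phi_zero Φ hadd
  | insert _ _ hj ih =>
      rw [Finset.sum_insert hj, Finset.sum_insert hj, hadd, ih]

theorem phi_norm_sq (Φ : (ℝ → ℂ) → (E →L[ℂ] E))
    (hmul : ∀ f g, Φ (f * g) = Φ f * Φ g)
    (hstar : ∀ f, Φ (star f) = ContinuousLinearMap.adjoint (Φ f))
    (h : ℝ → ℂ) (z : E) :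
    ⟪z, Φ (star h * h) z⟫_ℂ = ((‖Φ h z‖ : ℂ)) ^ 2 := by
  rw [hmul, hstar, ContinuousLinearMap.mul_apply,
    ContinuousLinearMap.adjoint_inner_right, inner_self_eq_norm_sq_to_K]
  norm_cast

theorem phi_key (Φ : (ℝ → ℂ) → (E →L[ℂ] E))
    (hadd : ∀ f g, Φ (f + g) = Φ f + Φ g)
    (hmul : ∀ f g, Φ (f * g) = Φ f * Φ g)
    (hstar : ∀ f, Φ (star f) = ContinuousLinearMap.adjoint (Φ f))
    (h k : ℝ → ℂ) (z : E)
    (hle : ∀ l, ‖h l‖ ≤ ‖k l‖) :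
    ‖Φ h z‖ ≤ ‖Φ k z‖ := by
  set g : ℝ → ℂ := fun l => ((Real.sqrt ((‖k l‖) ^ 2 - (‖h l‖) ^ 2) : ℝ) : ℂ) with hg
  have habs : ∀ w : ℂ, (starRingEnd ℂ) w * w = (((‖w‖) ^ 2 : ℝ) : ℂ) := by
    intro w
    rw [← Complex.normSq_eq_conj_mul_self]
    norm_cast
    exact (Complex.sq_norm w).symm
  have hfun : star h * h + star g * g = star k * k := by
    funext l
    have hnn : 0 ≤ (‖k l‖) ^ 2 - (‖h l‖) ^ 2 := by
      have := hle l
      nlinarith [norm_nonneg (h l), norm_nonneg (k l)]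
    simp only [Pi.add_apply, Pi.mul_apply, Pi.star_apply, Complex.star_def]
    rw [habs, habs, habs]
    have : ‖g l‖ ^ 2 = (‖k l‖) ^ 2 - (‖h l‖) ^ 2 := by
      rw [hg]
      simp only [Complex.norm_real, Real.norm_eq_abs]
      rw [abs_of_nonneg (Real.sqrt_nonneg _), Real.sq_sqrt hnn]
    rw [this]
    push_cast
    ring
  have hΦ := congrArg Φ hfun
  rw [hadd] at hΦ
  have hz := congrArg (fun T : E →L[ℂ] E => ⟪z, T z⟫_ℂ) hΦ
  simp only [ContinuousLinearMap.add_apply, inner_add_right] at hz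
  rw [phi_norm_sq Φ hmul hstar h z, phi_norm_sq Φ hmul hstar g z,
    phi_norm_sq Φ hmul hstar k z] at hz
  have hre : ‖Φ h z‖ ^ 2 + ‖Φ g z‖ ^ 2 = ‖Φ k z‖ ^ 2 := by exact_mod_cast hz
  have hsq : ‖Φ h z‖ ^ 2 ≤ ‖Φ k z‖ ^ 2 := by nlinarith [sq_nonneg ‖Φ g z‖]
  exact le_of_pow_le_pow_left₀ two_ne_zero (norm_nonneg _) hsq

theorem phi_norm_le (Φ : (ℝ → ℂ) → (E →L[ℂ] E))
    (hadd : ∀ f g, Φ (f + g) = Φ f + Φ g)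
    (hsmul : ∀ (c : ℂ) f, Φ (c • f) = c • Φ f)
    (hmul : ∀ f g, Φ (f * g) = Φ f * Φ g)
    (hstar : ∀ f, Φ (star f) = ContinuousLinearMap.adjoint (Φ f))
    (hone : Φ 1 = 1)
    (h : ℝ → ℂ) (M : ℝ) (z : E) (hM : 0 ≤ M)
    (hb : ∀ l, ‖h l‖ ≤ M) :
    ‖Φ h z‖ ≤ M * ‖z‖ := by
  have hk : Φ (fun _ => (M : ℂ)) = (M : ℂ) • (1 : E →L[ℂ] E) := by
    have : (fun _ : ℝ => (M : ℂ)) = (M : ℂ) • (1 : ℝ → ℂ) := by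
      funext l; simp
    rw [this, hsmul, hone]
  have hle := phi_key Φ hadd hmul hstar h (fun _ => (M : ℂ)) z
    (fun l => by simpa [abs_of_nonneg hM] using hb l)
  calc ‖Φ h z‖ ≤ ‖Φ (fun _ => (M : ℂ)) z‖ := hle
    _ = M * ‖z‖ := by
        rw [hk]
        simp [norm_smul, abs_of_nonneg hM]



theorem cexp_I_dist (a b : ℝ) :
    ‖Complex.exp (Complex.I * a) - Complex.exp (Complex.I * b)‖ ≤ |a - b| := by
  set θ : ℝ := a - b with hθ
  clear_value θ
  have hfact : Complex.exp (Complex.I * a) - Complex.exp (Complex.I * b)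
      = Complex.exp (Complex.I * b) * (Complex.exp (Complex.I * θ) - 1) := by
    rw [mul_sub, ← Complex.exp_add, mul_one]
    congr 2
    push_cast [hθ]
    ring
  rw [hfact, norm_mul]
  have h1 : ‖Complex.exp (Complex.I * b)‖ = 1 := by
    rw [Complex.norm_exp]; simp
  rw [h1, one_mul]
  have hre : (Complex.exp (Complex.I * θ) - 1).re = Real.cos θ - 1 := by
    rw [mul_comm]; simp [Complex.exp_ofReal_mul_I_re]
  have him : (Complex.exp (Complex.I * θ) - 1).im = Real.sin θ := by
    rw [mul_comm]; simp [Complex.exp_ofReal_mul_I_im]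
  have h1c : 1 - θ ^ 2 / 2 ≤ Real.cos θ := Real.one_sub_sq_div_two_le_cos
  have h2c : Real.sin θ ^ 2 + Real.cos θ ^ 2 = 1 := Real.sin_sq_add_cos_sq θ
  have hsq : (‖Complex.exp (Complex.I * θ) - 1‖) ^ 2 ≤ |θ| ^ 2 := by
    rw [Complex.sq_norm, Complex.normSq_apply, hre, him, sq_abs]
    have key : (Real.cos θ - 1) * (Real.cos θ - 1) + Real.sin θ * Real.sin θ
        = 2 - 2 * Real.cos θ := by linear_combination h2c
    rw [key]
    linarith [h1c]
  exact le_of_pow_le_pow_left₀ two_ne_zero (abs_nonneg _) hsq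

theorem exp_neg_le_inv_add_one {x : ℝ} (hx : 0 ≤ x) : Real.exp (-x) ≤ 1 / (1 + x) := by
  rw [Real.exp_neg, one_div]
  have h1 : (0:ℝ) < 1 + x := by linarith
  have h2 : 1 + x ≤ Real.exp x := by linarith [Real.add_one_le_exp x]
  exact inv_anti₀ h1 h2

theorem mul_exp_neg_sq_le {q : ℝ} (hq : 0 < q) {s : ℝ} (hs : 0 ≤ s) :
    s * Real.exp (-s ^ 2 * q / 2) ≤ 1 / Real.sqrt (2 * q) := by
  have hb : (Real.sqrt (q / 2)) ^ 2 = q / 2 := Real.sq_sqrt (by positivity)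
  have hsq2 : Real.sqrt (2 * q) = 2 * Real.sqrt (q / 2) := by
    rw [show (2:ℝ) * q = 2 ^ 2 * (q / 2) by ring, Real.sqrt_mul (by norm_num),
      Real.sqrt_sq (by norm_num : (0:ℝ) ≤ 2)]
  have hexp : Real.exp (-s ^ 2 * q / 2) ≤ 1 / (1 + s ^ 2 * q / 2) := by
    have := exp_neg_le_inv_add_one (x := s ^ 2 * q / 2) (by positivity)
    rw [show -s ^ 2 * q / 2 = -(s ^ 2 * q / 2) by ring]
    exact this
  have hpos : (0:ℝ) < 1 + s ^ 2 * q / 2 := by positivity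
  have hs2 : s * Real.exp (-s ^ 2 * q / 2) ≤ s / (1 + s ^ 2 * q / 2) := by
    calc s * Real.exp (-s ^ 2 * q / 2) ≤ s * (1 / (1 + s ^ 2 * q / 2)) :=
          mul_le_mul_of_nonneg_left hexp hs
      _ = s / (1 + s ^ 2 * q / 2) := by ring
  refine hs2.trans ?_
  rw [div_le_div_iff₀ hpos (by positivity : (0:ℝ) < Real.sqrt (2 * q))]
  have h3 : 0 ≤ s ^ 2 * (q / 2) - 2 * s * Real.sqrt (q / 2) + 1 := by
    nlinarith [sq_nonneg (s * Real.sqrt (q / 2) - 1), hb]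
  rw [hsq2]
  nlinarith [h3]



variable {q : ℝ}

theorem gauss_integrable (hq : 0 < q) :
    Integrable (fun t : ℝ => Real.exp (-(t ^ 2) / (2 * q))) := by
  have h := integrable_exp_neg_mul_sq (b := (2 * q)⁻¹) (by positivity)
  refine h.congr ?_
  filter_upwards with t
  congr 1
  field_simp

theorem gauss_int (hq : 0 < q) :
    ∫ t : ℝ, Real.exp (-(t ^ 2) / (2 * q)) = Real.sqrt (2 * π * q) := by
  have h := integral_gaussian ((2 * q)⁻¹)
  have hfun : (fun t : ℝ => Real.exp (-(t ^ 2) / (2 * q)))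
      = fun t : ℝ => Real.exp (-(2 * q)⁻¹ * t ^ 2) := by
    funext t; congr 1; field_simp
  rw [hfun, h]
  congr 1
  field_simp

theorem gauss_abs_integrable (hq : 0 < q) :
    Integrable (fun t : ℝ => |t| * Real.exp (-(t ^ 2) / (2 * q))) := by
  have h := (integrable_mul_exp_neg_mul_sq (b := (2 * q)⁻¹) (by positivity)).abs
  refine h.congr ?_
  filter_upwards with t
  rw [abs_mul, abs_of_pos (Real.exp_pos _)]
  congr 2
  field_simp

theorem gauss_char_integrable (hq : 0 < q) (l : ℝ) :
    Integrable (fun t : ℝ => ((Real.exp (-(t ^ 2) / (2 * q)) : ℝ) : ℂ)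
      * Complex.exp (Complex.I * l * t)) := by
  have hq' : (q : ℂ) ≠ 0 := by exact_mod_cast hq.ne'
  have h := integrable_cexp_quadratic (b := ((2 * q)⁻¹ : ℂ)) (by simp; positivity)
    (Complex.I * l) 0
  refine h.congr ?_
  filter_upwards with t
  rw [Complex.ofReal_exp, ← Complex.exp_add]
  congr 1
  push_cast
  field_simp
  ring

theorem gauss_fourier (hq : 0 < q) (l : ℝ) :
    ∫ t : ℝ, ((Real.exp (-(t ^ 2) / (2 * q)) : ℝ) : ℂ) * Complex.exp (Complex.I * l * t)
      = ((Real.sqrt (2 * π * q) : ℝ) : ℂ) * ((Real.exp (-(l ^ 2) * q / 2) : ℝ) : ℂ) := by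
  have hq' : (q : ℂ) ≠ 0 := by exact_mod_cast hq.ne'
  have h := fourierIntegral_gaussian (b := ((2 * q)⁻¹ : ℂ)) (by simp; positivity) ((l : ℂ))
  have hfun : (fun x : ℝ => Complex.exp (Complex.I * l * x)
        * Complex.exp (-((2 * q)⁻¹ : ℂ) * x ^ 2))
      = fun x : ℝ => ((Real.exp (-(x ^ 2) / (2 * q)) : ℝ) : ℂ) * Complex.exp (Complex.I * l * x) := by
    funext x
    rw [mul_comm, Complex.ofReal_exp]
    congr 2
    push_cast
    field_simp
  rw [hfun] at h
  rw [h]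
  congr 1
  · rw [show (↑π / ((2 * q)⁻¹ : ℂ)) = ((2 * π * q : ℝ) : ℂ) by push_cast; field_simp]
    rw [show ((1 : ℂ) / 2) = ((1 / 2 : ℝ) : ℂ) by norm_num]
    rw [← Complex.ofReal_cpow (by positivity)]
    rw [← Real.sqrt_eq_rpow]
  · rw [Complex.ofReal_exp]
    congr 1
    push_cast
    field_simp
    ring



def lamj (ΔE δ : ℝ) (j : ℕ) : ℝ := ΔE + j * δ

def Bset (S : Set ℝ) (ΔE δ : ℝ) (j : ℕ) : Set ℝ :=
  S ∩ Set.Ico (lamj ΔE δ j) (lamj ΔE δ (j + 1))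

def Tset (S : Set ℝ) (ΔE δ : ℝ) (N : ℕ) : Set ℝ :=
  S ∩ Set.Ici (lamj ΔE δ N)

theorem Bset_unique {S : Set ℝ} {ΔE δ : ℝ} (hδ : 0 < δ) {l : ℝ} {j k : ℕ}
    (hj : l ∈ Bset S ΔE δ j) (hk : l ∈ Bset S ΔE δ k) : j = k := by
  obtain ⟨-, hj1, hj2⟩ := hj
  obtain ⟨-, hk1, hk2⟩ := hk
  simp only [lamj] at hj1 hj2 hk1 hk2
  push_cast at hj2 hk2
  have h1 : (j : ℝ) < (k : ℝ) + 1 := by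
    by_contra hcon
    push_neg at hcon
    have : ((k:ℝ) + 1) * δ ≤ (j:ℝ) * δ := mul_le_mul_of_nonneg_right hcon hδ.le
    linarith
  have h2 : (k : ℝ) < (j : ℝ) + 1 := by
    by_contra hcon
    push_neg at hcon
    have : ((j:ℝ) + 1) * δ ≤ (k:ℝ) * δ := mul_le_mul_of_nonneg_right hcon hδ.le
    linarith
  have h1' : j < k + 1 := by exact_mod_cast h1
  have h2' : k < j + 1 := by exact_mod_cast h2
  omega

theorem funeq {S : Set ℝ} {ΔE δ : ℝ} (hΔE : 0 < ΔE) (hδ : 0 < δ)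
    (hS : S ⊆ {0} ∪ Set.Ici ΔE) (κ : ℝ → ℂ) (N : ℕ) :
    Set.indicator (S \ {0}) κ =
      (∑ j ∈ Finset.range N, κ (lamj ΔE δ j) • Set.indicator (Bset S ΔE δ j) (1 : ℝ → ℂ))
      + ((∑ j ∈ Finset.range N,
            Set.indicator (Bset S ΔE δ j) (fun l => κ l - κ (lamj ΔE δ j)))
        + Set.indicator (Tset S ΔE δ N) κ) := by
  funext l
  simp only [Pi.add_apply, Finset.sum_apply, Pi.smul_apply, Pi.one_apply, smul_eq_mul]
  by_cases hl : l ∈ S \ {0}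
  · have hlS : l ∈ S := hl.1
    have hlΔ : ΔE ≤ l := by
      rcases hS hlS with h | h
      · exact absurd h hl.2
      · exact h
    set j₀ := Nat.floor ((l - ΔE) / δ) with hj₀def
    have hnn : 0 ≤ (l - ΔE) / δ := div_nonneg (by linarith) hδ.le
    have hlo : lamj ΔE δ j₀ ≤ l := by
      have h1 : (j₀ : ℝ) ≤ (l - ΔE) / δ := Nat.floor_le hnn
      rw [le_div_iff₀ hδ] at h1
      simp only [lamj]; linarith
    have hhi : l < lamj ΔE δ (j₀ + 1) := by
      have h2 : (l - ΔE) / δ < (j₀ : ℝ) + 1 := Nat.lt_floor_add_one _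
      rw [div_lt_iff₀ hδ] at h2
      simp only [lamj]; push_cast; linarith
    have hmemB : ∀ j : ℕ, l ∈ Bset S ΔE δ j ↔ j = j₀ := by
      intro j
      constructor
      · intro hmem
        exact Bset_unique hδ hmem ⟨hlS, hlo, hhi⟩
      · rintro rfl
        exact ⟨hlS, hlo, hhi⟩
    have hmemT : l ∈ Tset S ΔE δ N ↔ N ≤ j₀ := by
      constructor
      · rintro ⟨-, hT⟩
        simp only [lamj, Set.mem_Ici] at hT
        have : (N : ℝ) * δ ≤ l - ΔE := by linarith
        exact Nat.le_floor ((le_div_iff₀ hδ).mpr this)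
      · intro hN
        refine ⟨hlS, ?_⟩
        have hNr : (N : ℝ) ≤ (j₀ : ℝ) := by exact_mod_cast hN
        have hmul : (N : ℝ) * δ ≤ (j₀ : ℝ) * δ := mul_le_mul_of_nonneg_right hNr hδ.le
        simp only [lamj, Set.mem_Ici] at hlo ⊢
        linarith
    rw [Set.indicator_of_mem hl]
    by_cases hcase : j₀ < N
    · have hjmem : j₀ ∈ Finset.range N := Finset.mem_range.mpr hcase
      have hnotT : l ∉ Tset S ΔE δ N := by rw [hmemT]; omega
      have hnotB : ∀ b : ℕ, b ≠ j₀ → l ∉ Bset S ΔE δ b := by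
        intro b hb hmem
        rw [hmemB] at hmem
        exact hb hmem
      rw [Set.indicator_of_notMem hnotT]
      rw [Finset.sum_eq_single_of_mem j₀ hjmem (fun b _ hb => by
        rw [Set.indicator_of_notMem (hnotB b hb)]; exact mul_zero _)]
      rw [Finset.sum_eq_single_of_mem j₀ hjmem (fun b _ hb =>
        Set.indicator_of_notMem (hnotB b hb) _)]
      rw [Set.indicator_of_mem ((hmemB j₀).mpr rfl), Set.indicator_of_mem ((hmemB j₀).mpr rfl)]
      simp only [Pi.one_apply]
      ring
    · have hT : l ∈ Tset S ΔE δ N := (hmemT).mpr (le_of_not_gt hcase)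
      have hnotB : ∀ b ∈ Finset.range N, l ∉ Bset S ΔE δ b := by
        intro b hb hmem
        rw [hmemB] at hmem
        subst hmem
        exact hcase (Finset.mem_range.mp hb)
      rw [Set.indicator_of_mem hT]
      rw [Finset.sum_eq_zero (fun b hb => by
        rw [Set.indicator_of_notMem (hnotB b hb)]; exact mul_zero _)]
      rw [Finset.sum_eq_zero (fun b hb => Set.indicator_of_notMem (hnotB b hb) _)]
      ring
  · have hpos : ∀ j : ℕ, (0 : ℝ) < lamj ΔE δ j := by
      intro j
      simp only [lamj]
      positivity
    have hnB : ∀ j, l ∉ Bset S ΔE δ j := by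
      intro j hmem
      apply hl
      refine ⟨hmem.1, ?_⟩
      intro h0
      rw [Set.mem_singleton_iff] at h0
      subst h0
      have h1 := hmem.2.1
      exact absurd h1 (not_le.mpr (hpos j))
    have hnT : l ∉ Tset S ΔE δ N := by
      intro hmem
      apply hl
      refine ⟨hmem.1, ?_⟩
      intro h0
      rw [Set.mem_singleton_iff] at h0
      subst h0
      exact absurd hmem.2 (not_le.mpr (hpos N))
    rw [Set.indicator_of_notMem hl, Set.indicator_of_notMem hnT]
    rw [Finset.sum_eq_zero (fun b _ => by
      rw [Set.indicator_of_notMem (hnB b)]; exact mul_zero _)]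
    rw [Finset.sum_eq_zero (fun b _ => Set.indicator_of_notMem (hnB b) _)]
    ring


theorem rsmul_coe (r : ℝ) (x : E) : r • x = ((r : ℂ)) • x :=
  RCLike.real_smul_eq_coe_smul (K := ℂ) r x

theorem approx (Φ : (ℝ → ℂ) → (E →L[ℂ] E))
    (hadd : ∀ f g, Φ (f + g) = Φ f + Φ g)
    (hsmul : ∀ (c : ℂ) f, Φ (c • f) = c • Φ f)
    (hmul : ∀ f g, Φ (f * g) = Φ f * Φ g)
    (hstar : ∀ f, Φ (star f) = ContinuousLinearMap.adjoint (Φ f))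
    (hone : Φ 1 = 1)
    {S : Set ℝ} {ΔE δ : ℝ} (hΔE : 0 < ΔE) (hδ : 0 < δ)
    (hS : S ⊆ {0} ∪ Set.Ici ΔE)
    (κ : ℝ → ℂ) (N : ℕ) (w y : E) (ε τ : ℝ) (hε : 0 ≤ ε)
    (hlip : ∀ j, j < N → ∀ l ∈ Bset S ΔE δ j,
      ‖κ l - κ (lamj ΔE δ j)‖ ≤ ε)
    (htail : ‖Φ (Set.indicator (Tset S ΔE δ N) κ) w‖ ≤ τ) :
    ‖⟪y, Φ (Set.indicator (S \ {0}) κ) w⟫_ℂ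
      - ∑ j ∈ Finset.range N,
          κ (lamj ΔE δ j) * ⟪y, Φ (Set.indicator (Bset S ΔE δ j) (1:ℝ→ℂ)) w⟫_ℂ‖
      ≤ ‖y‖ * (ε * ‖w‖ + τ) := by
  classical
  set d1 : ℝ → ℂ := ∑ j ∈ Finset.range N,
      Set.indicator (Bset S ΔE δ j) (fun l => κ l - κ (lamj ΔE δ j)) with hd1
  set d2 : ℝ → ℂ := Set.indicator (Tset S ΔE δ N) κ with hd2
  have hΦeq : Φ (Set.indicator (S \ {0}) κ)
      = (∑ j ∈ Finset.range N, κ (lamj ΔE δ j) • Φ (Set.indicator (Bset S ΔE δ j) (1:ℝ→ℂ)))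
        + (Φ d1 + Φ d2) := by
    rw [funeq hΔE hδ hS κ N, hadd, hadd, phi_sum Φ hadd]
    congr 1
    exact Finset.sum_congr rfl (fun j _ => hsmul _ _)
  have hinner : ⟪y, Φ (Set.indicator (S \ {0}) κ) w⟫_ℂ
      - (∑ j ∈ Finset.range N,
          κ (lamj ΔE δ j) * ⟪y, Φ (Set.indicator (Bset S ΔE δ j) (1:ℝ→ℂ)) w⟫_ℂ)
      = ⟪y, Φ d1 w⟫_ℂ + ⟪y, Φ d2 w⟫_ℂ := by
    rw [hΦeq]
    simp only [ContinuousLinearMap.add_apply, ContinuousLinearMap.sum_apply,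
      ContinuousLinearMap.smul_apply, inner_add_right, inner_sum, inner_smul_right]
    ring
  rw [hinner]
  have hb1 : ‖Φ d1 w‖ ≤ ε * ‖w‖ := by
    apply phi_norm_le Φ hadd hsmul hmul hstar hone d1 ε w hε
    intro l
    rw [hd1]
    simp only [Finset.sum_apply]
    by_cases hex : ∃ j ∈ Finset.range N, l ∈ Bset S ΔE δ j
    · obtain ⟨j₁, hj₁mem, hj₁⟩ := hex
      rw [Finset.sum_eq_single_of_mem j₁ hj₁mem (fun b _ hb =>
        Set.indicator_of_notMem (fun hlb => hb (Bset_unique hδ hlb hj₁)) _)]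
      rw [Set.indicator_of_mem hj₁]
      exact hlip j₁ (Finset.mem_range.mp hj₁mem) l hj₁
    · rw [Finset.sum_eq_zero (fun b hbmem =>
        Set.indicator_of_notMem (fun hlb => hex ⟨b, hbmem, hlb⟩) _)]
      simpa using hε
  calc ‖⟪y, Φ d1 w⟫_ℂ + ⟪y, Φ d2 w⟫_ℂ‖
      ≤ ‖⟪y, Φ d1 w⟫_ℂ‖ + ‖⟪y, Φ d2 w⟫_ℂ‖ := by
        exact norm_add_le _ _
    _ ≤ ‖y‖ * ‖Φ d1 w‖ + ‖y‖ * ‖Φ d2 w‖ := by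
        have h1 : ‖⟪y, Φ d1 w⟫_ℂ‖ ≤ ‖y‖ * ‖Φ d1 w‖ := by
          exact norm_inner_le_norm _ _
        have h2 : ‖⟪y, Φ d2 w⟫_ℂ‖ ≤ ‖y‖ * ‖Φ d2 w‖ := by
          exact norm_inner_le_norm _ _
        exact add_le_add h1 h2
    _ ≤ ‖y‖ * (ε * ‖w‖) + ‖y‖ * τ := by
        exact add_le_add (mul_le_mul_of_nonneg_left hb1 (norm_nonneg y))
          (mul_le_mul_of_nonneg_left htail (norm_nonneg y))
    _ = ‖y‖ * (ε * ‖w‖ + τ) := by ring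


end HGAux

open HGAux

variable {E : Type*} [NormedAddCommGroup E] [InnerProductSpace ℂ E] [CompleteSpace E]

/-- Gaussian-averaged Heisenberg evolution on the ground state. `Φ` encodes the
Borel functional calculus of a self-adjoint `H` with spectrum `S ⊆ {0} ∪ [ΔE, ∞)`,
ground eigenprojection `P({0}) = ⟨·,ψ₀⟩ψ₀` (so `Hψ₀ = 0`). For bounded `A` with
`⟨ψ₀, Aψ₀⟩ = 0` and `Ã = (1/√(2πq)) ∫ e^{iHt} A e^{−iHt} e^{−t²/(2q)} dt`,
one has `Ãψ₀ = ∫_{σ(H)∖{0}} e^{−λ²q/2} dP(λ) Aψ₀`. -/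
theorem heisenberg_gaussian_average_ground_state
    (Φ : (ℝ → ℂ) → (E →L[ℂ] E))
    (hadd : ∀ f g, Φ (f + g) = Φ f + Φ g)
    (hsmul : ∀ (c : ℂ) f, Φ (c • f) = c • Φ f)
    (hmul : ∀ f g, Φ (f * g) = Φ f * Φ g)
    (hstar : ∀ f, Φ (star f) = ContinuousLinearMap.adjoint (Φ f))
    (hone : Φ 1 = 1)
    (S : Set ℝ) (hSmeas : MeasurableSet S)
    (hsupp : ∀ f g : ℝ → ℂ, Set.EqOn f g S → Φ f = Φ g)
    (ΔE : ℝ) (hΔE : 0 < ΔE) (hS : S ⊆ {0} ∪ Set.Ici ΔE) (h0S : (0 : ℝ) ∈ S)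
    (ψ₀ : E) (hψ₀ : ‖ψ₀‖ = 1)
    (hGS : ∀ x : E, Φ (Set.indicator {(0 : ℝ)} 1) x = ⟪ψ₀, x⟫_ℂ • ψ₀)
    (A : E →L[ℂ] E) (hA : ⟪ψ₀, A ψ₀⟫_ℂ = 0)
    (q : ℝ) (hq : 0 < q)
    (hInt : Integrable (fun t : ℝ =>
      Real.exp (-(t ^ 2) / (2 * q)) •
        (Φ (fun lam => Complex.exp (Complex.I * lam * t)) * A *
          Φ (fun lam => Complex.exp (-(Complex.I * lam * t))))))
    (Atil : E →L[ℂ] E)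
    (hAtil : Atil = ((Real.sqrt (2 * Real.pi * q) : ℂ))⁻¹ •
      ∫ t : ℝ, Real.exp (-(t ^ 2) / (2 * q)) •
        (Φ (fun lam => Complex.exp (Complex.I * lam * t)) * A *
          Φ (fun lam => Complex.exp (-(Complex.I * lam * t))))) :
    Atil ψ₀ =
      Φ (Set.indicator (S \ {0})
        (fun lam => (Real.exp (-(lam ^ 2) * q / 2) : ℂ))) (A ψ₀) := by
  classical
  set w : E := A ψ₀ with hw
  set u : ℝ → ℂ := Set.indicator (S \ {0})
    (fun lam => (Real.exp (-(lam ^ 2) * q / 2) : ℂ)) with hu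
  set c : ℝ := Real.sqrt (2 * Real.pi * q) with hc
  have hcpos : 0 < c := Real.sqrt_pos.mpr (by positivity)
  -- ground state facts
  have hψinner : ⟪ψ₀, ψ₀⟫_ℂ = 1 := by
    rw [inner_self_eq_norm_sq_to_K, hψ₀]; norm_num
  have hP0ψ : Φ (Set.indicator {(0 : ℝ)} 1) ψ₀ = ψ₀ := by
    rw [hGS, hψinner, one_smul]
  have ha : ∀ t : ℝ, Φ (fun lam => Complex.exp (-(Complex.I * lam * t))) ψ₀ = ψ₀ := by
    intro t
    have hfun : (fun lam : ℝ => Complex.exp (-(Complex.I * lam * t)))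
        * Set.indicator {(0 : ℝ)} 1 = Set.indicator {(0 : ℝ)} 1 := by
      funext l
      by_cases hl : l ∈ ({(0 : ℝ)} : Set ℝ)
      · rw [Set.mem_singleton_iff] at hl
        subst hl
        simp [Set.indicator_of_mem]
      · rw [Pi.mul_apply, Set.indicator_of_notMem hl, mul_zero]
    calc Φ (fun lam => Complex.exp (-(Complex.I * lam * t))) ψ₀
        = Φ (fun lam => Complex.exp (-(Complex.I * lam * t)))
            (Φ (Set.indicator {(0 : ℝ)} 1) ψ₀) := by rw [hP0ψ]
      _ = Φ ((fun lam : ℝ => Complex.exp (-(Complex.I * lam * t)))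
            * Set.indicator {(0 : ℝ)} 1) ψ₀ := by
            rw [hmul]; rfl
      _ = ψ₀ := by rw [hfun, hP0ψ]
  have hw0 : Φ (Set.indicator {(0 : ℝ)} 1) w = 0 := by
    rw [hGS, hA, zero_smul]
  have hb : ∀ t : ℝ, Φ (fun lam => Complex.exp (Complex.I * lam * t)) w
      = Φ (Set.indicator (S \ {0}) (fun lam => Complex.exp (Complex.I * lam * t))) w := by
    intro t
    have hsupp' : Φ (fun lam => Complex.exp (Complex.I * lam * t))
        = Φ (Set.indicator (S \ {0}) (fun lam => Complex.exp (Complex.I * lam * t))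
            + Set.indicator {(0 : ℝ)} 1) := by
      apply hsupp
      intro l hlS
      simp only [Pi.add_apply]
      by_cases hl0 : l = (0 : ℝ)
      · subst hl0
        rw [Set.indicator_of_notMem (by simp : (0:ℝ) ∉ S \ {0}),
          Set.indicator_of_mem (Set.mem_singleton _)]
        simp
      · have hmem : l ∈ S \ {0} := ⟨hlS, by simpa using hl0⟩
        rw [Set.indicator_of_mem hmem, Set.indicator_of_notMem (by simpa using hl0)]
        simp
    rw [hsupp', hadd, ContinuousLinearMap.add_apply, hw0, add_zero]
  -- integrability of the vector-valued integrand
  have hptwise : ∀ t : ℝ, (Real.exp (-(t ^ 2) / (2 * q)) •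
        (Φ (fun lam => Complex.exp (Complex.I * lam * t)) * A *
          Φ (fun lam => Complex.exp (-(Complex.I * lam * t))))) ψ₀
      = Real.exp (-(t ^ 2) / (2 * q)) •
        (Φ (Set.indicator (S \ {0}) (fun lam => Complex.exp (Complex.I * lam * t))) w) := by
    intro t
    rw [ContinuousLinearMap.smul_apply]
    congr 1
    rw [ContinuousLinearMap.mul_apply, ContinuousLinearMap.mul_apply, ha t, ← hw, hb t]
  have hIntVec : Integrable (fun t : ℝ => Real.exp (-(t ^ 2) / (2 * q)) •
      (Φ (Set.indicator (S \ {0}) (fun lam => Complex.exp (Complex.I * lam * t))) w)) := by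
    have h1 := hInt.apply_continuousLinearMap ψ₀
    exact h1.congr (Filter.Eventually.of_forall hptwise)
  set IV : E := ∫ t : ℝ, Real.exp (-(t ^ 2) / (2 * q)) •
      (Φ (Set.indicator (S \ {0}) (fun lam => Complex.exp (Complex.I * lam * t))) w) with hIVdef
  have hAtilψ : Atil ψ₀ = ((c : ℂ))⁻¹ • IV := by
    rw [hAtil, ContinuousLinearMap.smul_apply]
    congr 1
    rw [ContinuousLinearMap.integral_apply hInt]
    exact integral_congr_ae (Filter.Eventually.of_forall hptwise)
  suffices hIVc : IV = (c : ℂ) • Φ u w by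
    rw [hAtilψ, hIVc, smul_smul, inv_mul_cancel₀
      (by exact_mod_cast hcpos.ne' : ((c : ℝ) : ℂ) ≠ 0), one_smul]
  -- weak equality against arbitrary y
  apply ext_inner_left ℂ
  intro y
  rw [inner_smul_right]
  -- constants
  have hJint : Integrable (fun t : ℝ => |t| * Real.exp (-(t ^ 2) / (2 * q))) :=
    gauss_abs_integrable hq
  have hGint : Integrable (fun t : ℝ => Real.exp (-(t ^ 2) / (2 * q))) :=
    gauss_integrable hq
  set J : ℝ := ∫ t : ℝ, |t| * Real.exp (-(t ^ 2) / (2 * q)) with hJ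
  have hJ0 : 0 ≤ J := integral_nonneg (fun t => by positivity)
  set R : ℝ := ‖Φ (Set.indicator (S \ {0}) (fun l : ℝ => (l : ℂ))) w‖ with hR
  have hR0 : 0 ≤ R := norm_nonneg _
  set Cq : ℝ := q / 2 * (2 / Real.sqrt (2 * q) + 1) with hCqdef
  have hCq0 : 0 ≤ Cq := by positivity
  set CST : ℝ := ‖y‖ * ‖w‖ * J + c * (Cq * (‖y‖ * ‖w‖)) with hCST
  have main : ∀ δ : ℝ, 0 < δ → δ ≤ 1 →
      ‖⟪y, IV⟫_ℂ - (c : ℂ) * ⟪y, Φ u w⟫_ℂ‖ ≤ δ * CST := by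
    intro δ hδp hδ1
    set aj : ℕ → ℂ := fun j => ⟪y, Φ (Set.indicator (Bset S ΔE δ j) (1 : ℝ → ℂ)) w⟫_ℂ with haj
    have hTpos : ∀ N : ℕ, (0:ℝ) < ΔE + N * δ := fun N => by positivity
    -- tail bound for the constant-one indicator
    have htail1 : ∀ N : ℕ, ‖Φ (Set.indicator (Tset S ΔE δ N) (1 : ℝ → ℂ)) w‖
        ≤ R / (ΔE + N * δ) := by
      intro N
      have hple : ∀ l : ℝ, ‖(((ΔE + N * δ : ℝ) : ℂ) •
            Set.indicator (Tset S ΔE δ N) (1 : ℝ → ℂ)) l‖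
          ≤ ‖Set.indicator (S \ {0}) (fun l : ℝ => (l : ℂ)) l‖ := by
        intro l
        simp only [Pi.smul_apply, smul_eq_mul]
        by_cases hl : l ∈ Tset S ΔE δ N
        · have hlge : ΔE + N * δ ≤ l := by
            have h2 := hl.2
            simpa [Tset, lamj] using h2
          have hl0 : l ∈ S \ {0} := ⟨hl.1, by
            intro h0
            rw [Set.mem_singleton_iff] at h0
            subst h0
            linarith [hTpos N]⟩
          rw [Set.indicator_of_mem hl, Set.indicator_of_mem hl0, Pi.one_apply, mul_one]
          rw [Complex.norm_real, Real.norm_eq_abs, Complex.norm_real, Real.norm_eq_abs,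
            abs_of_pos (hTpos N), abs_of_pos (by linarith [hTpos N] : (0:ℝ) < l)]
          exact hlge
        · rw [Set.indicator_of_notMem hl, mul_zero]
          simp
      have hkey := phi_key Φ hadd hmul hstar _ _ w hple
      rw [hsmul, ContinuousLinearMap.smul_apply, norm_smul] at hkey
      have hnrm : ‖((ΔE + N * δ : ℝ) : ℂ)‖ = ΔE + N * δ := by
        rw [Complex.norm_real, Real.norm_eq_abs]
        exact abs_of_pos (hTpos N)
      rw [hnrm] at hkey
      rw [le_div_iff₀ (hTpos N)]
      calc ‖Φ (Set.indicator (Tset S ΔE δ N) (1 : ℝ → ℂ)) w‖ * (ΔE + N * δ)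
          = (ΔE + N * δ) * ‖Φ (Set.indicator (Tset S ΔE δ N) (1 : ℝ → ℂ)) w‖ := by ring
        _ ≤ R := hkey
    -- tail bound for the oscillating function
    have htail1' : ∀ (t : ℝ) (N : ℕ),
        ‖Φ (Set.indicator (Tset S ΔE δ N) (fun lam => Complex.exp (Complex.I * lam * t))) w‖
        ≤ R / (ΔE + N * δ) := by
      intro t N
      refine le_trans (phi_key Φ hadd hmul hstar _
        (Set.indicator (Tset S ΔE δ N) (1 : ℝ → ℂ)) w ?_) (htail1 N)
      intro l
      by_cases hl : l ∈ Tset S ΔE δ N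
      · rw [Set.indicator_of_mem hl, Set.indicator_of_mem hl, Pi.one_apply]
        have habs1 : ‖Complex.exp (Complex.I * l * t)‖ = 1 := by
          rw [Complex.norm_exp]
          have : (Complex.I * l * t).re = 0 := by
            simp [Complex.mul_re, Complex.mul_im]
          rw [this, Real.exp_zero]
        simp [habs1]
      · simp [Set.indicator_of_notMem hl]
    -- tail bound for the Gaussian multiplier function
    have htail2 : ∀ N : ℕ,
        ‖Φ (Set.indicator (Tset S ΔE δ N)
            (fun lam : ℝ => (Real.exp (-(lam ^ 2) * q / 2) : ℂ))) w‖
        ≤ Real.exp (-(ΔE + N * δ) ^ 2 * q / 2) * ‖w‖ := by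
      intro N
      apply phi_norm_le Φ hadd hsmul hmul hstar hone _ _ w (Real.exp_pos _).le
      intro l
      by_cases hl : l ∈ Tset S ΔE δ N
      · rw [Set.indicator_of_mem hl, Complex.norm_real, Real.norm_eq_abs, abs_of_pos (Real.exp_pos _)]
        apply Real.exp_le_exp.mpr
        have hlge : ΔE + N * δ ≤ l := by
          have h2 := hl.2
          simpa [Tset, lamj] using h2
        have hsq : (ΔE + N * δ) ^ 2 ≤ l ^ 2 := by nlinarith [hTpos N]
        nlinarith [mul_le_mul_of_nonneg_right hsq hq.le]
      · rw [Set.indicator_of_notMem hl]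
        simp [(Real.exp_pos _).le]
    -- Lipschitz bounds on each small interval
    have hlip1 : ∀ (t : ℝ) (j : ℕ), ∀ l ∈ Bset S ΔE δ j,
        ‖Complex.exp (Complex.I * l * t)
          - Complex.exp (Complex.I * (lamj ΔE δ j) * t)‖ ≤ |t| * δ := by
      intro t j l hl
      obtain ⟨-, hlo, hhi⟩ := hl
      have h1 : Complex.I * (l : ℂ) * (t : ℂ) = Complex.I * ((l * t : ℝ) : ℂ) := by
        push_cast; ring
      have h2 : Complex.I * ((lamj ΔE δ j : ℝ) : ℂ) * (t : ℂ)
          = Complex.I * ((lamj ΔE δ j * t : ℝ) : ℂ) := by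
        push_cast; ring
      rw [h1, h2]
      refine le_trans (cexp_I_dist (l * t) (lamj ΔE δ j * t)) ?_
      rw [show l * t - lamj ΔE δ j * t = (l - lamj ΔE δ j) * t by ring, abs_mul]
      have hstep : lamj ΔE δ (j+1) = lamj ΔE δ j + δ := by
        simp only [lamj]; push_cast; ring
      have hld : |l - lamj ΔE δ j| ≤ δ := by
        rw [abs_of_nonneg (by linarith : (0:ℝ) ≤ l - lamj ΔE δ j)]
        rw [hstep] at hhi
        linarith
      calc |l - lamj ΔE δ j| * |t| ≤ δ * |t| :=
            mul_le_mul_of_nonneg_right hld (abs_nonneg t)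
        _ = |t| * δ := by ring
    have hlip2 : ∀ (j : ℕ), ∀ l ∈ Bset S ΔE δ j,
        ‖((Real.exp (-(l ^ 2) * q / 2) : ℝ) : ℂ)
          - ((Real.exp (-(lamj ΔE δ j ^ 2) * q / 2) : ℝ) : ℂ)‖ ≤ Cq * δ := by
      intro j l hl
      obtain ⟨-, hlo, hhi⟩ := hl
      set p : ℝ := lamj ΔE δ j with hp
      have hppos : 0 < p := by rw [hp]; simp only [lamj]; positivity
      have hlp : p ≤ l := hlo
      have hlhi : l < p + δ := by
        have hstep : lamj ΔE δ (j+1) = p + δ := by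
          rw [hp]; simp only [lamj]; push_cast; ring
        rw [hstep] at hhi
        exact hhi
      rw [show ((Real.exp (-(l ^ 2) * q / 2) : ℝ) : ℂ) - ((Real.exp (-(p ^ 2) * q / 2) : ℝ) : ℂ)
          = ((Real.exp (-(l ^ 2) * q / 2) - Real.exp (-(p ^ 2) * q / 2) : ℝ) : ℂ) by push_cast; ring]
      rw [Complex.norm_real, Real.norm_eq_abs]
      have hxy : -(l ^ 2) * q / 2 ≤ -(p ^ 2) * q / 2 := by
        have hsq : p ^ 2 ≤ l ^ 2 := by nlinarith
        nlinarith [mul_le_mul_of_nonneg_right hsq hq.le]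
      have habs : |Real.exp (-(l ^ 2) * q / 2) - Real.exp (-(p ^ 2) * q / 2)|
          = Real.exp (-(p ^ 2) * q / 2) - Real.exp (-(l ^ 2) * q / 2) := by
        rw [abs_sub_comm, abs_of_nonneg (sub_nonneg.mpr (Real.exp_le_exp.mpr hxy))]
      rw [habs]
      have hsplit : Real.exp (-(l ^ 2) * q / 2)
          = Real.exp (-(p ^ 2) * q / 2) * Real.exp (-((l ^ 2 - p ^ 2) * q / 2)) := by
        rw [← Real.exp_add]; congr 1; ring
      have h1m : 1 - Real.exp (-((l ^ 2 - p ^ 2) * q / 2)) ≤ (l ^ 2 - p ^ 2) * q / 2 := by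
        linarith [Real.add_one_le_exp (-((l ^ 2 - p ^ 2) * q / 2))]
      have hE1 : Real.exp (-(p ^ 2) * q / 2) ≤ 1 := by
        apply Real.exp_le_one_iff.mpr
        nlinarith
      have hmu : p * Real.exp (-(p ^ 2) * q / 2) ≤ 1 / Real.sqrt (2 * q) :=
        mul_exp_neg_sq_le hq hppos.le
      have hstep2 : Real.exp (-(p ^ 2) * q / 2) - Real.exp (-(l ^ 2) * q / 2)
          ≤ Real.exp (-(p ^ 2) * q / 2) * ((l ^ 2 - p ^ 2) * q / 2) := by
        rw [hsplit]
        have hmm := mul_le_mul_of_nonneg_left h1m (Real.exp_pos (-(p ^ 2) * q / 2)).le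
        nlinarith [hmm]
      calc Real.exp (-(p ^ 2) * q / 2) - Real.exp (-(l ^ 2) * q / 2)
          ≤ Real.exp (-(p ^ 2) * q / 2) * ((l ^ 2 - p ^ 2) * q / 2) := hstep2
        _ ≤ Real.exp (-(p ^ 2) * q / 2) * (δ * (2 * p + δ) * q / 2) := by
            apply mul_le_mul_of_nonneg_left _ (Real.exp_pos _).le
            have harea : l ^ 2 - p ^ 2 ≤ δ * (2 * p + δ) := by
              nlinarith [mul_le_mul_of_nonneg_right
                  (show l - p ≤ δ by linarith) (show (0:ℝ) ≤ l + p by linarith),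
                mul_le_mul_of_nonneg_left (show l + p ≤ 2 * p + δ by linarith) hδp.le]
            nlinarith [mul_le_mul_of_nonneg_right harea hq.le]
        _ = δ * (q / 2) * (2 * (p * Real.exp (-(p ^ 2) * q / 2))
              + δ * Real.exp (-(p ^ 2) * q / 2)) := by ring
        _ ≤ δ * (q / 2) * (2 * (1 / Real.sqrt (2 * q)) + 1 * 1) := by
            apply mul_le_mul_of_nonneg_left _ (by positivity)
            have h2' : δ * Real.exp (-(p ^ 2) * q / 2) ≤ 1 * 1 :=
              mul_le_mul hδ1 hE1 (Real.exp_pos _).le zero_le_one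
            linarith [hmu]
        _ = Cq * δ := by rw [hCqdef]; ring
    -- the two approximation estimates
    have hc1 : ∀ (t : ℝ) (N : ℕ),
        ‖⟪y, Φ (Set.indicator (S \ {0})
              (fun lam => Complex.exp (Complex.I * lam * t))) w⟫_ℂ
          - ∑ j ∈ Finset.range N, Complex.exp (Complex.I * (lamj ΔE δ j) * t) * aj j‖
        ≤ ‖y‖ * ((|t| * δ) * ‖w‖ + R / (ΔE + N * δ)) := by
      intro t N
      exact approx Φ hadd hsmul hmul hstar hone hΔE hδp hS
        (fun lam => Complex.exp (Complex.I * lam * t)) N w y (|t| * δ) (R / (ΔE + N * δ))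
        (by positivity) (fun j _ l hl => hlip1 t j l hl) (htail1' t N)
    have hc2 : ∀ N : ℕ,
        ‖⟪y, Φ (Set.indicator (S \ {0})
              (fun lam => (Real.exp (-(lam ^ 2) * q / 2) : ℂ))) w⟫_ℂ
          - ∑ j ∈ Finset.range N, ((Real.exp (-(lamj ΔE δ j ^ 2) * q / 2) : ℝ) : ℂ) * aj j‖
        ≤ ‖y‖ * ((Cq * δ) * ‖w‖ + Real.exp (-(ΔE + N * δ) ^ 2 * q / 2) * ‖w‖) := by
      intro N
      exact approx Φ hadd hsmul hmul hstar hone hΔE hδp hS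
        (fun lam => (Real.exp (-(lam ^ 2) * q / 2) : ℂ)) N w y (Cq * δ) _
        (by positivity) (fun j _ l hl => hlip2 j l hl) (htail2 N)
    -- integral representation of the left factor
    have hFint : Integrable (fun t : ℝ => ⟪y, Real.exp (-(t ^ 2) / (2 * q)) •
        (Φ (Set.indicator (S \ {0}) (fun lam => Complex.exp (Complex.I * lam * t))) w)⟫_ℂ) :=
      hIntVec.const_inner y
    have hXrep : ⟪y, IV⟫_ℂ = ∫ t : ℝ, ⟪y, Real.exp (-(t ^ 2) / (2 * q)) •
        (Φ (Set.indicator (S \ {0}) (fun lam => Complex.exp (Complex.I * lam * t))) w)⟫_ℂ := by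
      rw [hIVdef, ← integral_inner hIntVec y]
    have hsjint : ∀ j : ℕ, Integrable (fun t : ℝ =>
        ((Real.exp (-(t ^ 2) / (2 * q)) : ℝ) : ℂ)
          * Complex.exp (Complex.I * (lamj ΔE δ j) * t) * aj j) :=
      fun j => (gauss_char_integrable hq (lamj ΔE δ j)).mul_const _
    have hsNint : ∀ N : ℕ, Integrable (fun t : ℝ => ∑ j ∈ Finset.range N,
        ((Real.exp (-(t ^ 2) / (2 * q)) : ℝ) : ℂ)
          * Complex.exp (Complex.I * (lamj ΔE δ j) * t) * aj j) :=
      fun N => integrable_finset_sum _ (fun j _ => hsjint j)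
    have hsNval : ∀ N : ℕ, (∫ t : ℝ, ∑ j ∈ Finset.range N,
        ((Real.exp (-(t ^ 2) / (2 * q)) : ℝ) : ℂ)
          * Complex.exp (Complex.I * (lamj ΔE δ j) * t) * aj j)
        = (c : ℂ) * ∑ j ∈ Finset.range N,
            ((Real.exp (-(lamj ΔE δ j ^ 2) * q / 2) : ℝ) : ℂ) * aj j := by
      intro N
      rw [integral_finset_sum _ (fun j _ => hsjint j), Finset.mul_sum]
      refine Finset.sum_congr rfl (fun j _ => ?_)
      rw [MeasureTheory.integral_mul_const, gauss_fourier hq (lamj ΔE δ j), ← hc]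
      ring
    -- pointwise bound on the integrand difference
    have hptb : ∀ (N : ℕ) (t : ℝ),
        ‖⟪y, Real.exp (-(t ^ 2) / (2 * q)) •
            (Φ (Set.indicator (S \ {0}) (fun lam => Complex.exp (Complex.I * lam * t))) w)⟫_ℂ
          - ∑ j ∈ Finset.range N, ((Real.exp (-(t ^ 2) / (2 * q)) : ℝ) : ℂ)
              * Complex.exp (Complex.I * (lamj ΔE δ j) * t) * aj j‖
        ≤ (‖y‖ * ‖w‖ * δ) * (|t| * Real.exp (-(t ^ 2) / (2 * q)))
          + (‖y‖ * (R / (ΔE + N * δ))) * Real.exp (-(t ^ 2) / (2 * q)) := by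
      intro N t
      rw [rsmul_coe, inner_smul_right]
      rw [show (∑ j ∈ Finset.range N, ((Real.exp (-(t ^ 2) / (2 * q)) : ℝ) : ℂ)
            * Complex.exp (Complex.I * (lamj ΔE δ j) * t) * aj j)
          = ((Real.exp (-(t ^ 2) / (2 * q)) : ℝ) : ℂ)
            * ∑ j ∈ Finset.range N, Complex.exp (Complex.I * (lamj ΔE δ j) * t) * aj j by
        rw [Finset.mul_sum]
        exact Finset.sum_congr rfl (fun j _ => by ring)]
      rw [← mul_sub, norm_mul, Complex.norm_real, Real.norm_eq_abs,
        abs_of_pos (Real.exp_pos _)]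
      calc Real.exp (-(t ^ 2) / (2 * q)) *
            ‖⟪y, Φ (Set.indicator (S \ {0})
                (fun lam => Complex.exp (Complex.I * lam * t))) w⟫_ℂ
              - ∑ j ∈ Finset.range N, Complex.exp (Complex.I * (lamj ΔE δ j) * t) * aj j‖
          ≤ Real.exp (-(t ^ 2) / (2 * q)) * (‖y‖ * ((|t| * δ) * ‖w‖ + R / (ΔE + N * δ))) := by
            apply mul_le_mul_of_nonneg_left _ (Real.exp_pos _).le
            exact hc1 t N
        _ = (‖y‖ * ‖w‖ * δ) * (|t| * Real.exp (-(t ^ 2) / (2 * q)))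
            + (‖y‖ * (R / (ΔE + N * δ))) * Real.exp (-(t ^ 2) / (2 * q)) := by ring
    -- claim A
    have hA1 : ∀ N : ℕ, ‖⟪y, IV⟫_ℂ
        - (c : ℂ) * ∑ j ∈ Finset.range N,
            ((Real.exp (-(lamj ΔE δ j ^ 2) * q / 2) : ℝ) : ℂ) * aj j‖
        ≤ (‖y‖ * ‖w‖ * δ) * J + (‖y‖ * (R / (ΔE + N * δ))) * c := by
      intro N
      rw [hXrep, ← hsNval N, ← integral_sub hFint (hsNint N)]
      refine le_trans (norm_integral_le_integral_norm _) ?_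
      have hbint : Integrable (fun t : ℝ =>
          (‖y‖ * ‖w‖ * δ) * (|t| * Real.exp (-(t ^ 2) / (2 * q)))
          + (‖y‖ * (R / (ΔE + N * δ))) * Real.exp (-(t ^ 2) / (2 * q))) :=
        (hJint.const_mul _).add (hGint.const_mul _)
      refine le_trans (integral_mono ((hFint.sub (hsNint N)).norm) hbint (fun t => hptb N t)) ?_
      rw [integral_add (hJint.const_mul _) (hGint.const_mul _),
        integral_const_mul, integral_const_mul, ← hJ, gauss_int hq, ← hc]
    -- claim B
    have hB1 : ∀ N : ℕ, ‖(c : ℂ) * ⟪y, Φ u w⟫_ℂ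
        - (c : ℂ) * ∑ j ∈ Finset.range N,
            ((Real.exp (-(lamj ΔE δ j ^ 2) * q / 2) : ℝ) : ℂ) * aj j‖
        ≤ c * (‖y‖ * ((Cq * δ) * ‖w‖ + Real.exp (-(ΔE + N * δ) ^ 2 * q / 2) * ‖w‖)) := by
      intro N
      rw [← mul_sub, norm_mul, Complex.norm_real, Real.norm_eq_abs, abs_of_pos hcpos]
      apply mul_le_mul_of_nonneg_left _ hcpos.le
      rw [hu]
      exact hc2 N
    -- combine and pass to the limit in N
    have hcomb : ∀ N : ℕ, ‖⟪y, IV⟫_ℂ - (c : ℂ) * ⟪y, Φ u w⟫_ℂ‖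
        ≤ δ * CST + ((‖y‖ * (R / (ΔE + N * δ))) * c
            + c * (‖y‖ * (Real.exp (-(ΔE + N * δ) ^ 2 * q / 2) * ‖w‖))) := by
      intro N
      set Ξ : ℂ := (c : ℂ) * ∑ j ∈ Finset.range N,
          ((Real.exp (-(lamj ΔE δ j ^ 2) * q / 2) : ℝ) : ℂ) * aj j with hΞ
      calc ‖⟪y, IV⟫_ℂ - (c : ℂ) * ⟪y, Φ u w⟫_ℂ‖
          = ‖(⟪y, IV⟫_ℂ - Ξ) + (Ξ - (c : ℂ) * ⟪y, Φ u w⟫_ℂ)‖ := by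
            congr 1; ring
        _ ≤ ‖⟪y, IV⟫_ℂ - Ξ‖ + ‖Ξ - (c : ℂ) * ⟪y, Φ u w⟫_ℂ‖ :=
            norm_add_le _ _
        _ = ‖⟪y, IV⟫_ℂ - Ξ‖
            + ‖(c : ℂ) * ⟪y, Φ u w⟫_ℂ - Ξ‖ := by
            rw [norm_sub_rev Ξ ((c : ℂ) * ⟪y, Φ u w⟫_ℂ)]
        _ ≤ ((‖y‖ * ‖w‖ * δ) * J + (‖y‖ * (R / (ΔE + N * δ))) * c)
            + c * (‖y‖ * ((Cq * δ) * ‖w‖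
                + Real.exp (-(ΔE + N * δ) ^ 2 * q / 2) * ‖w‖)) :=
            add_le_add (hA1 N) (hB1 N)
        _ = δ * CST + ((‖y‖ * (R / (ΔE + N * δ))) * c
            + c * (‖y‖ * (Real.exp (-(ΔE + N * δ) ^ 2 * q / 2) * ‖w‖))) := by
            rw [hCST]; ring
    have hp : Filter.Tendsto (fun N : ℕ => ΔE + N * δ) Filter.atTop Filter.atTop :=
      Filter.tendsto_atTop_add_const_left _ ΔE
        (Filter.Tendsto.atTop_mul_const hδp tendsto_natCast_atTop_atTop)
    have h1 : Filter.Tendsto (fun N : ℕ => (‖y‖ * (R / (ΔE + N * δ))) * c)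
        Filter.atTop (nhds 0) := by
      have hd := Filter.Tendsto.div_atTop (tendsto_const_nhds (x := R)) hp
      have := (hd.const_mul (‖y‖)).mul_const c
      simpa using this
    have h2 : Filter.Tendsto
        (fun N : ℕ => c * (‖y‖ * (Real.exp (-(ΔE + N * δ) ^ 2 * q / 2) * ‖w‖)))
        Filter.atTop (nhds 0) := by
      have hsq' : Filter.Tendsto (fun N : ℕ => (ΔE + N * δ) ^ 2)
          Filter.atTop Filter.atTop := by
        simpa [pow_two] using hp.atTop_mul_atTop₀ hp
      have hx2 : Filter.Tendsto (fun N : ℕ => (ΔE + N * δ) ^ 2 * q / 2)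
          Filter.atTop Filter.atTop := by
        have := hsq'.atTop_mul_const (show (0:ℝ) < q / 2 by positivity)
        refine this.congr (fun N => ?_)
        ring
      have hexp : Filter.Tendsto (fun N : ℕ => Real.exp (-((ΔE + N * δ) ^ 2 * q / 2)))
          Filter.atTop (nhds 0) := Real.tendsto_exp_neg_atTop_nhds_zero.comp hx2
      have hexp' : Filter.Tendsto (fun N : ℕ => Real.exp (-(ΔE + N * δ) ^ 2 * q / 2))
          Filter.atTop (nhds 0) := by
        refine hexp.congr (fun N => ?_)
        congr 1
        ring
      have := ((hexp'.mul_const (‖w‖)).const_mul (‖y‖)).const_mul c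
      simpa using this
    have htb : Filter.Tendsto (fun N : ℕ => δ * CST + ((‖y‖ * (R / (ΔE + N * δ))) * c
        + c * (‖y‖ * (Real.exp (-(ΔE + N * δ) ^ 2 * q / 2) * ‖w‖))))
        Filter.atTop (nhds (δ * CST)) := by
      have := (tendsto_const_nhds (x := δ * CST)).add (h1.add h2)
      simpa using this
    exact ge_of_tendsto' htb hcomb
  -- let δ → 0
  have hseq : ∀ n : ℕ, ‖⟪y, IV⟫_ℂ - (c : ℂ) * ⟪y, Φ u w⟫_ℂ‖
      ≤ (1 / ((n : ℝ) + 1)) * CST := by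
    intro n
    refine main (1 / ((n : ℝ) + 1)) (by positivity) ?_
    rw [div_le_one (by positivity)]
    linarith [Nat.cast_nonneg (α := ℝ) n]
  have hlim : Filter.Tendsto (fun n : ℕ => (1 / ((n : ℝ) + 1)) * CST)
      Filter.atTop (nhds 0) := by
    simpa using tendsto_one_div_add_atTop_nhds_zero_nat.mul_const CST
  have hle0 : ‖⟪y, IV⟫_ℂ - (c : ℂ) * ⟪y, Φ u w⟫_ℂ‖ ≤ 0 :=
    ge_of_tendsto' hlim hseq
  have heq0 : ⟪y, IV⟫_ℂ - (c : ℂ) * ⟪y, Φ u w⟫_ℂ = 0 := by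
    have hnn := norm_nonneg (⟪y, IV⟫_ℂ - (c : ℂ) * ⟪y, Φ u w⟫_ℂ)
    exact norm_eq_zero.mp (le_antisymm hle0 hnn)
  exact sub_eq_zero.mp heq0
end
end

section
/- Under the hypotheses of the previous statement, if moreover ‖[H, A]ψ₀‖ ≤ K for the unit ground state ψ₀ (with Hψ₀ = 0 and ⟨ψ₀, Aψ₀⟩ = 0), then ‖Ãψ₀‖ ≤ K·(ΔE)^{−1}·exp(−(ΔE)²q/2). -/
open MeasureTheory
open scoped InnerProductSpace

variable {E : Type*} [NormedAddCommGroup E] [InnerProductSpace ℂ E] [CompleteSpace E]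
set_option linter.unusedSectionVars false
set_option maxHeartbeats 1000000

namespace HeisenbergAux

variable (Φ : (ℝ → ℂ) → (E →L[ℂ] E))

lemma inner_star_mul (hmul : ∀ f g, Φ (f * g) = Φ f * Φ g)
    (hstar : ∀ f, Φ (star f) = ContinuousLinearMap.adjoint (Φ f))
    (f : ℝ → ℂ) (x : E) :
    ⟪x, Φ (star f * f) x⟫_ℂ = (‖Φ f x‖ : ℂ) ^ 2 := by
  rw [hmul, ContinuousLinearMap.mul_apply, hstar, ContinuousLinearMap.adjoint_inner_right]
  exact inner_self_eq_norm_sq_to_K _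

lemma norm_apply_le (hadd : ∀ f g, Φ (f + g) = Φ f + Φ g)
    (hsmul : ∀ (c : ℂ) f, Φ (c • f) = c • Φ f)
    (hmul : ∀ f g, Φ (f * g) = Φ f * Φ g)
    (hstar : ∀ f, Φ (star f) = ContinuousLinearMap.adjoint (Φ f))
    (hone : Φ 1 = 1)
    (S : Set ℝ)
    (hsupp : ∀ f g : ℝ → ℂ, Set.EqOn f g S → Φ f = Φ g)
    (f : ℝ → ℂ) (M : ℝ) (hM : 0 ≤ M) (hfM : ∀ l ∈ S, ‖f l‖ ≤ M)
    (x : E) : ‖Φ f x‖ ≤ M * ‖x‖ := by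
  set g : ℝ → ℂ := fun l => ((Real.sqrt (M ^ 2 - ‖f l‖ ^ 2) : ℝ) : ℂ) with hg
  have key : Φ (star f * f) + Φ (star g * g) = (((M ^ 2 : ℝ)) : ℂ) • Φ 1 := by
    rw [← hadd, ← hsmul]
    refine hsupp _ _ ?_
    intro l hl
    have h1 : ‖f l‖ ^ 2 ≤ M ^ 2 := by
      have := hfM l hl
      nlinarith [norm_nonneg (f l)]
    simp only [Pi.add_apply, Pi.mul_apply, Pi.star_apply, Pi.smul_apply, Pi.one_apply,
      RCLike.star_def, hg, smul_eq_mul, mul_one]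
    rw [mul_comm ((starRingEnd ℂ) (f l)), Complex.mul_conj', Complex.conj_ofReal,
      ← Complex.ofReal_mul, Real.mul_self_sqrt (by linarith)]
    push_cast
    ring
  have h2 : ‖Φ f x‖ ^ 2 + ‖Φ g x‖ ^ 2 = M ^ 2 * ‖x‖ ^ 2 := by
    have h3 := congrArg (fun (T : E →L[ℂ] E) => ⟪x, T x⟫_ℂ) key
    simp only [ContinuousLinearMap.add_apply, inner_add_right,
      ContinuousLinearMap.smul_apply, inner_smul_right, hone,
      ContinuousLinearMap.one_apply] at h3
    rw [inner_star_mul Φ hmul hstar f x, inner_star_mul Φ hmul hstar g x,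
      inner_self_eq_norm_sq_to_K] at h3
    have h4 : ((‖Φ f x‖ ^ 2 + ‖Φ g x‖ ^ 2 : ℝ) : ℂ) = ((M ^ 2 * ‖x‖ ^ 2 : ℝ) : ℂ) := by
      push_cast
      push_cast at h3
      exact h3
    exact_mod_cast h4
  nlinarith [norm_nonneg (Φ f x), norm_nonneg (Φ g x), norm_nonneg x,
    mul_nonneg hM (norm_nonneg x)]

lemma norm_sq_le (hadd : ∀ f g, Φ (f + g) = Φ f + Φ g)
    (hmul : ∀ f g, Φ (f * g) = Φ f * Φ g)
    (hstar : ∀ f, Φ (star f) = ContinuousLinearMap.adjoint (Φ f))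
    (g h : ℝ → ℝ) (hgh : ∀ l, g l ^ 2 ≤ h l) (x : E) :
    ‖Φ (fun l => ((g l : ℝ) : ℂ)) x‖ ^ 2 ≤ (⟪x, Φ (fun l => ((h l : ℝ) : ℂ)) x⟫_ℂ).re := by
  set gc : ℝ → ℂ := fun l => ((g l : ℝ) : ℂ) with hgc
  set r : ℝ → ℂ := fun l => ((Real.sqrt (h l - g l ^ 2) : ℝ) : ℂ) with hr
  have key : Φ (fun l => ((h l : ℝ) : ℂ)) = Φ (star gc * gc) + Φ (star r * r) := by
    rw [← hadd]
    congr 1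
    funext l
    simp only [Pi.add_apply, Pi.mul_apply, Pi.star_apply, RCLike.star_def, hgc, hr]
    rw [mul_comm ((starRingEnd ℂ) _), Complex.mul_conj', mul_comm ((starRingEnd ℂ) _),
      Complex.mul_conj']
    simp only [Complex.norm_real, Real.norm_eq_abs]
    rw [← Complex.ofReal_pow, ← Complex.ofReal_pow, _root_.sq_abs, _root_.sq_abs,
      Real.sq_sqrt (by linarith [hgh l]), ← Complex.ofReal_add]
    norm_cast
    try ring
  rw [key]
  simp only [ContinuousLinearMap.add_apply, inner_add_right]
  rw [inner_star_mul Φ hmul hstar gc x, inner_star_mul Φ hmul hstar r x]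
  rw [Complex.add_re]
  have e1 : ((‖Φ gc x‖ : ℂ) ^ 2).re = ‖Φ gc x‖ ^ 2 := by norm_cast
  have e2 : ((‖Φ r x‖ : ℂ) ^ 2).re = ‖Φ r x‖ ^ 2 := by norm_cast
  rw [e1, e2]
  nlinarith [norm_nonneg (Φ r x)]

lemma norm_sq_le_mul (hadd : ∀ f g, Φ (f + g) = Φ f + Φ g)
    (hsmul : ∀ (c : ℂ) f, Φ (c • f) = c • Φ f)
    (hmul : ∀ f g, Φ (f * g) = Φ f * Φ g)
    (hstar : ∀ f, Φ (star f) = ContinuousLinearMap.adjoint (Φ f))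
    (g Fr : ℝ → ℝ) (c : ℝ)
    (hgF : ∀ l, g l ^ 2 ≤ c * Fr l ^ 2) (x : E) :
    ‖Φ (fun l => ((g l : ℝ) : ℂ)) x‖ ^ 2 ≤ c * ‖Φ (fun l => ((Fr l : ℝ) : ℂ)) x‖ ^ 2 := by
  have h1 := norm_sq_le Φ hadd hmul hstar g (fun l => c * Fr l ^ 2) hgF x
  set Fc : ℝ → ℂ := fun l => ((Fr l : ℝ) : ℂ) with hFc
  have h2 : Φ (fun l => (((c * Fr l ^ 2 : ℝ)) : ℂ)) = (c : ℂ) • Φ (star Fc * Fc) := by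
    rw [← hsmul]
    congr 1
    funext l
    simp only [Pi.smul_apply, Pi.mul_apply, Pi.star_apply, RCLike.star_def, hFc,
      smul_eq_mul]
    rw [mul_comm ((starRingEnd ℂ) _), Complex.mul_conj']
    simp only [Complex.norm_real, Real.norm_eq_abs]
    rw [← Complex.ofReal_pow, _root_.sq_abs, ← Complex.ofReal_mul]
    try norm_cast
  rw [h2] at h1
  simp only [ContinuousLinearMap.smul_apply, inner_smul_right] at h1
  rw [inner_star_mul Φ hmul hstar Fc x] at h1
  have e1 : ((c : ℂ) * (‖Φ Fc x‖ : ℂ) ^ 2).re = c * ‖Φ Fc x‖ ^ 2 := by norm_cast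
  rw [e1] at h1
  exact h1




lemma phi_sub (hadd : ∀ f g, Φ (f + g) = Φ f + Φ g) (f g : ℝ → ℂ) :
    Φ (f - g) = Φ f - Φ g := by
  have h := hadd (f - g) g
  rw [sub_add_cancel] at h
  rw [h]
  abel

lemma phi_congr_apply (f g : ℝ → ℂ) (h : ∀ l, f l = g l) (x : E) : Φ f x = Φ g x := by
  rw [funext h]

lemma phi_eval
    (hsmul : ∀ (c : ℂ) f, Φ (c • f) = c • Φ f)
    (hmul : ∀ f g, Φ (f * g) = Φ f * Φ g)
    (ψ₀ : E) (hψ₀ : ‖ψ₀‖ = 1)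
    (hGS : ∀ x : E, Φ (Set.indicator {(0 : ℝ)} 1) x = ⟪ψ₀, x⟫_ℂ • ψ₀)
    (f : ℝ → ℂ) : Φ f ψ₀ = f 0 • ψ₀ := by
  have hid : Φ (Set.indicator {(0:ℝ)} 1) ψ₀ = ψ₀ := by
    rw [hGS, inner_self_eq_norm_sq_to_K, hψ₀]
    norm_num
  have h1 : f * Set.indicator {(0:ℝ)} 1 = f 0 • Set.indicator {(0:ℝ)} 1 := by
    funext l
    by_cases hl : l = (0:ℝ)
    · subst hl
      simp [Set.indicator_apply]
    · simp [Set.indicator_apply, hl]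
  calc Φ f ψ₀ = Φ f (Φ (Set.indicator {(0:ℝ)} 1) ψ₀) := by rw [hid]
    _ = Φ (f * Set.indicator {(0:ℝ)} 1) ψ₀ := by rw [hmul]; rfl
    _ = Φ (f 0 • Set.indicator {(0:ℝ)} 1) ψ₀ := by rw [h1]
    _ = f 0 • Φ (Set.indicator {(0:ℝ)} 1) ψ₀ := by rw [hsmul]; rfl
    _ = f 0 • ψ₀ := by rw [hid]

lemma sqrt_div_bound {a b : ℝ} {n : ℕ} (hn : 1 ≤ n) (ha : 0 ≤ a) (hb : 0 ≤ b)
    (h : a ^ 2 ≤ ((n:ℝ) ^ 2)⁻¹ * b ^ 2) : a ≤ b / n := by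
  have hn0 : (0:ℝ) < n := by exact_mod_cast hn
  have h9 : ((n:ℝ) ^ 2)⁻¹ * b ^ 2 = (b / n) ^ 2 := by
    field_simp
  calc a = Real.sqrt (a ^ 2) := (Real.sqrt_sq ha).symm
    _ ≤ Real.sqrt ((b / n) ^ 2) := Real.sqrt_le_sqrt (by rw [← h9]; exact h)
    _ = b / n := Real.sqrt_sq (by positivity)

lemma Pn_tendsto (hadd : ∀ f g, Φ (f + g) = Φ f + Φ g)
    (hsmul : ∀ (c : ℂ) f, Φ (c • f) = c • Φ f)
    (hmul : ∀ f g, Φ (f * g) = Φ f * Φ g)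
    (hstar : ∀ f, Φ (star f) = ContinuousLinearMap.adjoint (Φ f))
    (hone : Φ 1 = 1)
    (x : E) :
    Filter.Tendsto (fun n : ℕ => Φ (fun l : ℝ => if |l| ≤ (n:ℝ) then (1:ℂ) else 0) x)
      Filter.atTop (nhds x) := by
  rw [← tendsto_sub_nhds_zero_iff]
  apply squeeze_zero_norm' (a := fun n : ℕ => ‖Φ (fun l : ℝ => (l:ℂ)) x‖ / n)
  · filter_upwards [Filter.eventually_ge_atTop 1] with n hn
    have hn0 : (0:ℝ) < n := by exact_mod_cast hn
    have hxx : Φ (fun l : ℝ => if |l| ≤ (n:ℝ) then (1:ℂ) else 0) x - x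
        = Φ (fun l : ℝ => ((((if |l| ≤ (n:ℝ) then (1:ℝ) else 0) - 1 : ℝ)) : ℂ)) x := by
      have h1 : (fun l : ℝ => ((((if |l| ≤ (n:ℝ) then (1:ℝ) else 0) - 1 : ℝ)) : ℂ))
          = (fun l : ℝ => if |l| ≤ (n:ℝ) then (1:ℂ) else 0) - 1 := by
        funext l
        by_cases hl : |l| ≤ (n:ℝ) <;> simp [hl]
      rw [h1, phi_sub Φ hadd, ContinuousLinearMap.sub_apply, hone]
      rfl
    rw [hxx]
    have hb := norm_sq_le_mul Φ hadd hsmul hmul hstar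
      (fun l : ℝ => (if |l| ≤ (n:ℝ) then (1:ℝ) else 0) - 1) (fun l : ℝ => l)
      (((n:ℝ) ^ 2)⁻¹) ?_ x
    · exact sqrt_div_bound hn (norm_nonneg _) (norm_nonneg _) hb
    · intro l
      by_cases hl : |l| ≤ (n:ℝ)
      · simp only [hl, if_true]
        norm_num
        positivity
      · push_neg at hl
        simp only [if_neg (not_le.mpr hl)]
        have h2 : (n:ℝ) ^ 2 ≤ l ^ 2 := by nlinarith [_root_.sq_abs l, abs_nonneg l]
        have h3 : (0:ℝ) < (n:ℝ) ^ 2 := by positivity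
        have h4 := mul_le_mul_of_nonneg_left h2 (inv_pos.mpr h3).le
        rw [inv_mul_cancel₀ h3.ne'] at h4
        nlinarith
  · exact tendsto_const_div_atTop_nhds_zero_nat _



lemma gauss_ft {q : ℝ} (hq : 0 < q) (l : ℝ) :
    ∫ t : ℝ, ((Real.exp (-(t ^ 2) / (2 * q)) : ℝ) : ℂ) * Complex.exp (Complex.I * l * t)
      = ((Real.sqrt (2 * Real.pi * q) : ℝ) : ℂ) * ((Real.exp (-(q * l ^ 2) / 2) : ℝ) : ℂ) := by
  have hb : (0:ℝ) < ((((2 * q)⁻¹ : ℝ)) : ℂ).re := by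
    rw [Complex.ofReal_re]
    positivity
  have h := fourierIntegral_gaussian (b := (((2 * q)⁻¹ : ℝ) : ℂ)) hb (l : ℂ)
  have h1 : (fun t : ℝ => ((Real.exp (-(t ^ 2) / (2 * q)) : ℝ) : ℂ) * Complex.exp (Complex.I * l * t))
      = fun t : ℝ => Complex.exp (Complex.I * (l:ℂ) * (t:ℝ)) * Complex.exp (-(((2 * q)⁻¹ : ℝ) : ℂ) * (t:ℝ) ^ 2) := by
    funext t
    rw [Complex.ofReal_exp, ← Complex.exp_add, ← Complex.exp_add]
    congr 1
    push_cast
    ring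
  rw [h1, h]
  have h2 : ((Real.pi : ℂ)) / (((2 * q)⁻¹ : ℝ) : ℂ) = ((2 * Real.pi * q : ℝ) : ℂ) := by
    rw [← Complex.ofReal_div]
    congr 1
    field_simp
  rw [h2]
  have h3 : ((2 * Real.pi * q : ℝ) : ℂ) ^ (1 / 2 : ℂ) = ((Real.sqrt (2 * Real.pi * q) : ℝ) : ℂ) := by
    rw [show (1 / 2 : ℂ) = ((1 / 2 : ℝ) : ℂ) by norm_num,
      ← Complex.ofReal_cpow (by positivity)]
    norm_num
    rw [Real.sqrt_eq_rpow]
  rw [h3]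
  congr 1
  rw [Complex.ofReal_exp]
  congr 1
  have hq' : (q:ℂ) ≠ 0 := by exact_mod_cast hq.ne'
  push_cast
  field_simp
  ring


lemma deriv_w
    (hsmul : ∀ (c : ℂ) f, Φ (c • f) = c • Φ f)
    (hmul : ∀ f g, Φ (f * g) = Φ f * Φ g)
    (ψ₀ : E) (hψ₀ : ‖ψ₀‖ = 1)
    (hGS : ∀ x : E, Φ (Set.indicator {(0 : ℝ)} 1) x = ⟪ψ₀, x⟫_ℂ • ψ₀)
    (A Cm : E →L[ℂ] E)
    (hcomm : ∀ (ψ : E) (t : ℝ),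
      HasDerivAt
        (fun τ => Φ (fun lam => Complex.exp (Complex.I * lam * τ))
          (A (Φ (fun lam => Complex.exp (-(Complex.I * lam * τ))) ψ)))
        (Φ (fun lam => Complex.exp (Complex.I * lam * t))
          (Complex.I • Cm (Φ (fun lam => Complex.exp (-(Complex.I * lam * t))) ψ))) t)
    (t : ℝ) :
    HasDerivAt (fun s : ℝ => Φ (fun lam : ℝ => Complex.exp (Complex.I * lam * s)) (A ψ₀))
      (Complex.I • Φ (fun lam : ℝ => Complex.exp (Complex.I * lam * t)) (Cm ψ₀)) t := by
  have h0 := hcomm ψ₀ t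
  have hfix : ∀ τ : ℂ, Φ (fun lam : ℝ => Complex.exp (-(Complex.I * lam * τ))) ψ₀ = ψ₀ := by
    intro τ
    rw [phi_eval Φ hsmul hmul ψ₀ hψ₀ hGS]
    norm_num
  simp only [hfix] at h0
  rw [ContinuousLinearMap.map_smul] at h0
  have h1 := HasDerivAt.scomp (𝕜 := ℝ) t h0 Complex.ofRealCLM.hasDerivAt
  simp only [Function.comp, Complex.ofRealCLM_apply, Complex.ofReal_one, one_smul] at h1
  exact h1

lemma u_eq
    (hadd : ∀ f g, Φ (f + g) = Φ f + Φ g)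
    (hsmul : ∀ (c : ℂ) f, Φ (c • f) = c • Φ f)
    (hmul : ∀ f g, Φ (f * g) = Φ f * Φ g)
    (hstar : ∀ f, Φ (star f) = ContinuousLinearMap.adjoint (Φ f))
    (hone : Φ 1 = 1)
    (S : Set ℝ)
    (hsupp : ∀ f g : ℝ → ℂ, Set.EqOn f g S → Φ f = Φ g)
    (ψ₀ : E) (hψ₀ : ‖ψ₀‖ = 1)
    (hGS : ∀ x : E, Φ (Set.indicator {(0 : ℝ)} 1) x = ⟪ψ₀, x⟫_ℂ • ψ₀)
    (A Cm : E →L[ℂ] E)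
    (hcomm : ∀ (ψ : E) (t : ℝ),
      HasDerivAt
        (fun τ => Φ (fun lam => Complex.exp (Complex.I * lam * τ))
          (A (Φ (fun lam => Complex.exp (-(Complex.I * lam * τ))) ψ)))
        (Φ (fun lam => Complex.exp (Complex.I * lam * t))
          (Complex.I • Cm (Φ (fun lam => Complex.exp (-(Complex.I * lam * t))) ψ))) t) :
    Cm ψ₀ = Φ (fun l : ℝ => (l : ℂ)) (A ψ₀) := by
  have hw0 := deriv_w Φ hsmul hmul ψ₀ hψ₀ hGS A Cm hcomm 0
  have he0 : (fun lam : ℝ => Complex.exp (Complex.I * lam * (0:ℝ))) = (1 : ℝ → ℂ) := by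
    funext lam
    norm_num
  rw [he0, hone] at hw0
  have hw0' : HasDerivAt (fun s : ℝ => Φ (fun lam : ℝ => Complex.exp (Complex.I * lam * s)) (A ψ₀))
      (Complex.I • Cm ψ₀) 0 := hw0
  have key : ∀ n : ℕ, 1 ≤ n →
      Φ (fun l : ℝ => if |l| ≤ (n:ℝ) then (1:ℂ) else 0) (Cm ψ₀)
        = Φ ((fun l : ℝ => if |l| ≤ (n:ℝ) then (1:ℂ) else 0) * (fun l : ℝ => (l:ℂ))) (A ψ₀) := by
    intro n hn
    have hn0 : (0:ℝ) < n := by exact_mod_cast hn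
    have hn0' : ((n:ℝ))⁻¹ ≤ 1 := by
      rw [inv_le_one_iff₀]
      right
      exact_mod_cast hn
    set chi : ℝ → ℂ := fun l : ℝ => if |l| ≤ (n:ℝ) then (1:ℂ) else 0 with hchi
    have d1 : HasDerivAt
        (fun s : ℝ => Φ (chi * (fun lam : ℝ => Complex.exp (Complex.I * lam * s))) (A ψ₀))
        (Complex.I • Φ chi (Cm ψ₀)) 0 := by
      have hcomp := ((Φ chi).restrictScalars ℝ).hasFDerivAt.comp_hasDerivAt 0 hw0'
      have hfe : (⇑((Φ chi).restrictScalars ℝ) ∘ fun s : ℝ => Φ (fun lam : ℝ => Complex.exp (Complex.I * lam * s)) (A ψ₀))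
          = fun s : ℝ => Φ (chi * (fun lam : ℝ => Complex.exp (Complex.I * lam * s))) (A ψ₀) := by
        funext s
        simp only [Function.comp_apply, ContinuousLinearMap.coe_restrictScalars']
        rw [hmul]
        rfl
      rw [hfe] at hcomp
      simp only [ContinuousLinearMap.coe_restrictScalars'] at hcomp
      rw [ContinuousLinearMap.map_smul] at hcomp
      exact hcomp
    have d2 : HasDerivAt
        (fun s : ℝ => Φ (chi * (fun lam : ℝ => Complex.exp (Complex.I * lam * s))) (A ψ₀))
        (Complex.I • Φ (chi * (fun l : ℝ => (l:ℂ))) (A ψ₀)) 0 := by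
      rw [hasDerivAt_iff_isLittleO, Asymptotics.isLittleO_iff]
      intro ε hε
      have hδ : (0:ℝ) < min ((n:ℝ))⁻¹ (ε / ((n:ℝ) ^ 2 * ‖A ψ₀‖ + 1)) := by positivity
      rw [Metric.eventually_nhds_iff]
      refine ⟨_, hδ, ?_⟩
      intro s hs
      rw [Real.dist_eq, sub_zero] at hs
      have hs1 : |s| ≤ ((n:ℝ))⁻¹ := le_of_lt (lt_of_lt_of_le hs (min_le_left _ _))
      have hs2 : |s| ≤ ε / ((n:ℝ) ^ 2 * ‖A ψ₀‖ + 1) := le_of_lt (lt_of_lt_of_le hs (min_le_right _ _))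
      have hid : Φ (chi * (fun lam : ℝ => Complex.exp (Complex.I * lam * s))) (A ψ₀)
            - Φ (chi * (fun lam : ℝ => Complex.exp (Complex.I * lam * (0:ℝ)))) (A ψ₀)
            - (s - 0) • (Complex.I • Φ (chi * (fun l : ℝ => (l:ℂ))) (A ψ₀))
          = Φ (fun l : ℝ => chi l * (Complex.exp (Complex.I * l * s) - 1 - Complex.I * l * s)) (A ψ₀) := by
        have h1 : (s - 0) • (Complex.I • Φ (chi * (fun l : ℝ => (l:ℂ))) (A ψ₀))
            = Φ (((s:ℂ) * Complex.I) • (chi * (fun l : ℝ => (l:ℂ)))) (A ψ₀) := by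
          rw [sub_zero, ← smul_assoc, hsmul]
          rw [ContinuousLinearMap.smul_apply]
          congr 1
        rw [h1, ← ContinuousLinearMap.sub_apply, ← ContinuousLinearMap.sub_apply,
          ← phi_sub Φ hadd, ← phi_sub Φ hadd]
        apply phi_congr_apply
        intro l
        simp only [Pi.sub_apply, Pi.mul_apply, Pi.smul_apply, smul_eq_mul]
        have hz : Complex.I * (l:ℂ) * ((0:ℝ):ℂ) = 0 := by
          norm_num
        rw [hz, Complex.exp_zero]
        ring
      have hbd : ‖Φ (fun l : ℝ => chi l * (Complex.exp (Complex.I * l * s) - 1 - Complex.I * l * s)) (A ψ₀)‖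
          ≤ ((n:ℝ) ^ 2 * s ^ 2) * ‖A ψ₀‖ := by
        apply norm_apply_le Φ hadd hsmul hmul hstar hone S hsupp _ _ (by positivity)
        intro l hl
        by_cases hln : |l| ≤ (n:ℝ)
        · have habsI : ‖Complex.I * (l:ℂ) * (s:ℂ)‖ = |l| * |s| := by
            rw [norm_mul, norm_mul, Complex.norm_I, Complex.norm_real, Complex.norm_real, one_mul,
              Real.norm_eq_abs, Real.norm_eq_abs]
          have hls : |l| * |s| ≤ 1 := by
            calc |l| * |s| ≤ (n:ℝ) * ((n:ℝ))⁻¹ :=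
              mul_le_mul hln hs1 (abs_nonneg _) (le_of_lt hn0)
            _ = 1 := mul_inv_cancel₀ (ne_of_gt hn0)
          have hexp := Complex.norm_exp_sub_one_sub_id_le (by rw [habsI]; exact hls)
          have hc1 : chi l = 1 := by rw [hchi]; simp [hln]
          rw [hc1, one_mul]
          calc ‖Complex.exp (Complex.I * l * s) - 1 - Complex.I * l * s‖
              ≤ ‖Complex.I * (l:ℂ) * (s:ℂ)‖ ^ 2 := hexp
            _ = (|l| * |s|) ^ 2 := by rw [habsI]
            _ ≤ (n:ℝ) ^ 2 * s ^ 2 := by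
                have h9 : |l| * |s| ≤ (n:ℝ) * |s| :=
                  mul_le_mul_of_nonneg_right hln (abs_nonneg _)
                have h10 : (0:ℝ) ≤ |l| * |s| := by positivity
                nlinarith [_root_.sq_abs s]
        · have hc0 : chi l = 0 := by rw [hchi]; simp [hln]
          rw [hc0, zero_mul]
          simp only [norm_zero]
          positivity
      rw [hid]
      calc ‖Φ (fun l : ℝ => chi l * (Complex.exp (Complex.I * l * s) - 1 - Complex.I * l * s)) (A ψ₀)‖
          ≤ ((n:ℝ) ^ 2 * s ^ 2) * ‖A ψ₀‖ := hbd
        _ ≤ ε * ‖s - 0‖ := by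
            rw [sub_zero, Real.norm_eq_abs]
            have h11 : (n:ℝ) ^ 2 * s ^ 2 * ‖A ψ₀‖ = ((n:ℝ) ^ 2 * ‖A ψ₀‖ * |s|) * |s| := by
              rw [← _root_.sq_abs s]
              ring
            rw [h11]
            apply mul_le_mul_of_nonneg_right _ (abs_nonneg s)
            have h12 : (n:ℝ) ^ 2 * ‖A ψ₀‖ * |s| ≤ (n:ℝ) ^ 2 * ‖A ψ₀‖ * (ε / ((n:ℝ) ^ 2 * ‖A ψ₀‖ + 1)) :=
              mul_le_mul_of_nonneg_left hs2 (by positivity)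
            have h13 : (n:ℝ) ^ 2 * ‖A ψ₀‖ * (ε / ((n:ℝ) ^ 2 * ‖A ψ₀‖ + 1)) ≤ ε := by
              rw [mul_div_assoc']
              rw [div_le_iff₀ (by positivity)]
              nlinarith [norm_nonneg (A ψ₀), sq_nonneg ((n:ℝ))]
            linarith
    have huniq := d2.unique d1
    exact (smul_right_injective E Complex.I_ne_zero huniq).symm
  have t1 := Pn_tendsto Φ hadd hsmul hmul hstar hone (Cm ψ₀)
  have hsq : (fun l : ℝ => ((l * l : ℝ) : ℂ)) = (fun l : ℝ => (l:ℂ)) * (fun l : ℝ => (l:ℂ)) := by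
    funext l
    push_cast
    rfl
  have t2 : Filter.Tendsto
      (fun n : ℕ => Φ ((fun l : ℝ => if |l| ≤ (n:ℝ) then (1:ℂ) else 0) * (fun l : ℝ => (l:ℂ))) (A ψ₀))
      Filter.atTop (nhds (Φ (fun l : ℝ => (l:ℂ)) (A ψ₀))) := by
    rw [← tendsto_sub_nhds_zero_iff]
    apply squeeze_zero_norm'
      (a := fun n : ℕ => ‖Φ ((fun l : ℝ => (l:ℂ)) * (fun l : ℝ => (l:ℂ))) (A ψ₀)‖ / n)
    · filter_upwards [Filter.eventually_ge_atTop 1] with n hn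
      have hn0 : (0:ℝ) < n := by exact_mod_cast hn
      have hxx : Φ ((fun l : ℝ => if |l| ≤ (n:ℝ) then (1:ℂ) else 0) * (fun l : ℝ => (l:ℂ))) (A ψ₀)
            - Φ (fun l : ℝ => (l:ℂ)) (A ψ₀)
          = Φ (fun l : ℝ => ((((if |l| ≤ (n:ℝ) then (1:ℝ) else 0) - 1) * l : ℝ) : ℂ)) (A ψ₀) := by
        rw [← ContinuousLinearMap.sub_apply, ← phi_sub Φ hadd]
        apply phi_congr_apply
        intro l
        simp only [Pi.sub_apply, Pi.mul_apply]
        by_cases hl : |l| ≤ (n:ℝ) <;> simp [hl] <;> push_cast <;> ring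
      rw [hxx]
      have hb := norm_sq_le_mul Φ hadd hsmul hmul hstar
        (fun l : ℝ => ((if |l| ≤ (n:ℝ) then (1:ℝ) else 0) - 1) * l) (fun l : ℝ => l * l)
        (((n:ℝ) ^ 2)⁻¹) ?_ (A ψ₀)
      · rw [hsq] at hb
        exact sqrt_div_bound hn (norm_nonneg _) (norm_nonneg _) hb
      · intro l
        by_cases hl : |l| ≤ (n:ℝ)
        · simp only [if_pos hl]
          norm_num
          positivity
        · simp only [if_neg hl]
          push_neg at hl
          have h2 : (n:ℝ) ^ 2 ≤ l ^ 2 := by nlinarith [_root_.sq_abs l, abs_nonneg l]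
          have h3 : (0:ℝ) < (n:ℝ) ^ 2 := by positivity
          have h4 := mul_le_mul_of_nonneg_left h2 (inv_pos.mpr h3).le
          rw [inv_mul_cancel₀ h3.ne'] at h4
          have h5 : (0:ℝ) ≤ l ^ 2 := sq_nonneg l
          nlinarith [sq_nonneg (l * l), sq_nonneg l]
    · exact tendsto_const_div_atTop_nhds_zero_nat _
  have t1' : Filter.Tendsto (fun n : ℕ => Φ (fun l : ℝ => if |l| ≤ (n:ℝ) then (1:ℂ) else 0) (Cm ψ₀))
      Filter.atTop (nhds (Φ (fun l : ℝ => (l:ℂ)) (A ψ₀))) := by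
    apply t2.congr'
    filter_upwards [Filter.eventually_ge_atTop 1] with n hn
    exact (key n hn).symm
  exact tendsto_nhds_unique t1 t1'


lemma exchange
    (hadd : ∀ f g, Φ (f + g) = Φ f + Φ g)
    (hsmul : ∀ (c : ℂ) f, Φ (c • f) = c • Φ f)
    (hmul : ∀ f g, Φ (f * g) = Φ f * Φ g)
    (hstar : ∀ f, Φ (star f) = ContinuousLinearMap.adjoint (Φ f))
    (hone : Φ 1 = 1)
    (S : Set ℝ)
    (hsupp : ∀ f g : ℝ → ℂ, Set.EqOn f g S → Φ f = Φ g)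
    {q : ℝ} (hq : 0 < q) (x : E)
    (hcont : Continuous (fun t : ℝ => Φ (fun lam : ℝ => Complex.exp (Complex.I * lam * t)) x)) :
    ∫ t : ℝ, Real.exp (-(t ^ 2) / (2 * q)) • Φ (fun lam : ℝ => Complex.exp (Complex.I * lam * t)) x
      = Φ (fun l : ℝ => ((Real.sqrt (2 * Real.pi * q) : ℝ) : ℂ) * ((Real.exp (-(q * l ^ 2) / 2) : ℝ) : ℂ)) x := by
  have habs1 : ∀ (t l : ℝ), ‖Complex.exp (Complex.I * l * t)‖ = 1 := by
    intro t l
    rw [Complex.norm_exp]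
    norm_num [Complex.mul_re, Complex.mul_im]
  have hknn : ∀ t : ℝ, 0 ≤ Real.exp (-(t ^ 2) / (2 * q)) := fun t => (Real.exp_pos _).le
  have hkint : Integrable (fun t : ℝ => Real.exp (-(t ^ 2) / (2 * q))) := by
    have hrw : (fun t : ℝ => Real.exp (-(t ^ 2) / (2 * q)))
        = fun t : ℝ => Real.exp (-(2 * q)⁻¹ * t ^ 2) := by
      funext t
      congr 1
      field_simp
    rw [hrw]
    exact integrable_exp_neg_mul_sq (by positivity)
  have hkcont : Continuous (fun t : ℝ => Real.exp (-(t ^ 2) / (2 * q))) := by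
    fun_prop
  have hxnorm : ∀ t : ℝ, ‖Φ (fun lam : ℝ => Complex.exp (Complex.I * lam * t)) x‖ ≤ ‖x‖ := by
    intro t
    have h := norm_apply_le Φ hadd hsmul hmul hstar hone S hsupp
      (fun lam : ℝ => Complex.exp (Complex.I * lam * t)) 1 one_pos.le
      (fun l _ => le_of_eq (habs1 t l)) x
    rwa [one_mul] at h
  have hwint : Integrable (fun t : ℝ =>
      Real.exp (-(t ^ 2) / (2 * q)) • Φ (fun lam : ℝ => Complex.exp (Complex.I * lam * t)) x) := by
    apply Integrable.mono' (hkint.mul_const ‖x‖)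
    · exact (hkcont.smul hcont).aestronglyMeasurable
    · filter_upwards with t
      rw [norm_smul, Real.norm_eq_abs, _root_.abs_of_nonneg (hknn t)]
      exact mul_le_mul_of_nonneg_left (hxnorm t) (hknn t)
  have hmain : ∀ m : ℕ,
      Φ (fun l : ℝ => if |l| ≤ (m:ℝ) then (1:ℂ) else 0)
        (∫ t : ℝ, Real.exp (-(t ^ 2) / (2 * q)) • Φ (fun lam : ℝ => Complex.exp (Complex.I * lam * t)) x)
      = Φ (fun l : ℝ => if |l| ≤ (m:ℝ) then (1:ℂ) else 0)
        (Φ (fun l : ℝ => ((Real.sqrt (2 * Real.pi * q) : ℝ) : ℂ) * ((Real.exp (-(q * l ^ 2) / 2) : ℝ) : ℂ)) x) := by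
    intro m
    let Fm : C(ℝ × Set.Icc (-(m:ℝ)) (m:ℝ), ℂ) := ⟨fun p => Complex.exp (Complex.I * ((p.2 : ℝ) : ℂ) * (p.1 : ℂ)),
      Complex.continuous_exp.comp
        (((continuous_const.mul
          (Complex.continuous_ofReal.comp (continuous_subtype_val.comp continuous_snd))).mul
          (Complex.continuous_ofReal.comp continuous_fst)))⟩
    let rest : C(ℝ, C(Set.Icc (-(m:ℝ)) (m:ℝ), ℂ)) := Fm.curry
    let g : ℝ → C(Set.Icc (-(m:ℝ)) (m:ℝ), ℂ) := fun t => Real.exp (-(t ^ 2) / (2 * q)) • rest t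
    have hrest_apply : ∀ (t : ℝ) (l : Set.Icc (-(m:ℝ)) (m:ℝ)), rest t l = Complex.exp (Complex.I * ((l : ℝ) : ℂ) * (t : ℂ)) := by
      intro t l
      rfl
    have hrestnorm : ∀ t : ℝ, ‖rest t‖ ≤ 1 := by
      intro t
      rw [ContinuousMap.norm_le _ zero_le_one]
      intro l
      rw [hrest_apply, habs1]
    have hgcont : Continuous g := hkcont.smul (map_continuous rest)
    have hgint : Integrable g := by
      apply Integrable.mono' hkint
      · exact hgcont.aestronglyMeasurable
      · filter_upwards with t
        apply (ContinuousMap.norm_le _ (hknn t)).mpr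
        intro l
        show ‖Real.exp (-(t ^ 2) / (2 * q)) • rest t l‖ ≤ _
        rw [norm_smul, Real.norm_eq_abs, _root_.abs_of_nonneg (hknn t), hrest_apply,
          habs1, mul_one]
    let ext : C(Set.Icc (-(m:ℝ)) (m:ℝ), ℂ) → (ℝ → ℂ) := fun f l => if h : l ∈ Set.Icc (-(m:ℝ)) (m:ℝ) then f ⟨l, h⟩ else 0
    let Λlin : C(Set.Icc (-(m:ℝ)) (m:ℝ), ℂ) →ₗ[ℂ] E :=
      { toFun := fun f => Φ (ext f) x
        map_add' := by
          intro f h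
          show Φ _ x = Φ _ x + Φ _ x
          rw [← ContinuousLinearMap.add_apply, ← hadd]
          apply phi_congr_apply
          intro l
          simp only [ext, Pi.add_apply]
          split
          · simp
          · simp
        map_smul' := by
          intro a f
          show Φ _ x = a • Φ _ x
          rw [← ContinuousLinearMap.smul_apply, ← hsmul]
          apply phi_congr_apply
          intro l
          simp only [ext, Pi.smul_apply]
          split
          · simp
          · simp }
    have hΛb : ∀ f : C(Set.Icc (-(m:ℝ)) (m:ℝ), ℂ), ‖Λlin f‖ ≤ ‖x‖ * ‖f‖ := by
      intro f
      rw [mul_comm]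
      apply norm_apply_le Φ hadd hsmul hmul hstar hone S hsupp _ _ (norm_nonneg f)
      intro l _
      simp only [ext]
      split
      · exact ContinuousMap.norm_coe_le_norm f _
      · simp only [norm_zero]
        exact norm_nonneg f
    let Λ : C(Set.Icc (-(m:ℝ)) (m:ℝ), ℂ) →L[ℂ] E := Λlin.mkContinuous ‖x‖ hΛb
    have hΛapp : ∀ f : C(Set.Icc (-(m:ℝ)) (m:ℝ), ℂ), Λ f = Φ (ext f) x := fun f => rfl
    have hPU : ∀ t : ℝ, Φ (fun l : ℝ => if |l| ≤ (m:ℝ) then (1:ℂ) else 0)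
        (Φ (fun lam : ℝ => Complex.exp (Complex.I * lam * t)) x) = Λ (rest t) := by
      intro t
      rw [hΛapp]
      have h1 : Φ (fun l : ℝ => if |l| ≤ (m:ℝ) then (1:ℂ) else 0)
          (Φ (fun lam : ℝ => Complex.exp (Complex.I * lam * t)) x)
          = Φ ((fun l : ℝ => if |l| ≤ (m:ℝ) then (1:ℂ) else 0)
              * (fun lam : ℝ => Complex.exp (Complex.I * lam * t))) x := by
        rw [hmul]
        rfl
      rw [h1]
      apply phi_congr_apply
      intro l
      simp only [ext, Pi.mul_apply]
      by_cases hl : l ∈ Set.Icc (-(m:ℝ)) (m:ℝ)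
      · rw [dif_pos hl, hrest_apply]
        have hl' : |l| ≤ (m:ℝ) := abs_le.mpr (Set.mem_Icc.mp hl)
        rw [if_pos hl', one_mul]
      · rw [dif_neg hl]
        have hl' : ¬ (|l| ≤ (m:ℝ)) := fun hc => hl (Set.mem_Icc.mpr (abs_le.mp hc))
        rw [if_neg hl', zero_mul]
    let Gc : C(Set.Icc (-(m:ℝ)) (m:ℝ), ℂ) := ⟨fun l : Set.Icc (-(m:ℝ)) (m:ℝ) => ((Real.sqrt (2 * Real.pi * q) : ℝ) : ℂ)
        * ((Real.exp (-(q * (l : ℝ) ^ 2) / 2) : ℝ) : ℂ), by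
      apply continuous_const.mul
      apply Complex.continuous_ofReal.comp
      apply Real.continuous_exp.comp
      fun_prop⟩
    have hgI : (∫ t : ℝ, g t) = Gc := by
      apply ContinuousMap.ext
      intro l
      have hev := ContinuousLinearMap.integral_comp_comm (ContinuousMap.evalCLM ℂ l) hgint
      have hev' : ∀ t : ℝ, (ContinuousMap.evalCLM ℂ l) (g t)
          = ((Real.exp (-(t ^ 2) / (2 * q)) : ℝ) : ℂ) * Complex.exp (Complex.I * ((l : ℝ) : ℂ) * (t : ℂ)) := by
        intro t
        show (g t) l = _
        rw [show (g t) l = Real.exp (-(t ^ 2) / (2 * q)) • (rest t l) from rfl, hrest_apply,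
          Complex.real_smul]
      rw [funext hev'] at hev
      show (∫ t : ℝ, g t) l = _
      rw [show (∫ t : ℝ, g t) l = (ContinuousMap.evalCLM ℂ l) (∫ t : ℝ, g t) from rfl, ← hev]
      exact gauss_ft hq (l : ℝ)
    have s1 : Φ (fun l : ℝ => if |l| ≤ (m:ℝ) then (1:ℂ) else 0)
        (∫ t : ℝ, Real.exp (-(t ^ 2) / (2 * q)) • Φ (fun lam : ℝ => Complex.exp (Complex.I * lam * t)) x)
        = ∫ t : ℝ, Φ (fun l : ℝ => if |l| ≤ (m:ℝ) then (1:ℂ) else 0)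
            (Real.exp (-(t ^ 2) / (2 * q)) • Φ (fun lam : ℝ => Complex.exp (Complex.I * lam * t)) x) :=
      (ContinuousLinearMap.integral_comp_comm _ hwint).symm
    have s2 : ∀ t : ℝ, Φ (fun l : ℝ => if |l| ≤ (m:ℝ) then (1:ℂ) else 0)
        (Real.exp (-(t ^ 2) / (2 * q)) • Φ (fun lam : ℝ => Complex.exp (Complex.I * lam * t)) x)
        = Λ (g t) := by
      intro t
      rw [ContinuousLinearMap.map_smul_of_tower, hPU t]
      show _ = Λ (Real.exp (-(t ^ 2) / (2 * q)) • rest t)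
      rw [ContinuousLinearMap.map_smul_of_tower]
    have s3 : (∫ t : ℝ, Λ (g t)) = Λ (∫ t : ℝ, g t) :=
      ContinuousLinearMap.integral_comp_comm Λ hgint
    have s4 : Λ Gc = Φ (fun l : ℝ => if |l| ≤ (m:ℝ) then (1:ℂ) else 0)
        (Φ (fun l : ℝ => ((Real.sqrt (2 * Real.pi * q) : ℝ) : ℂ) * ((Real.exp (-(q * l ^ 2) / 2) : ℝ) : ℂ)) x) := by
      rw [hΛapp]
      have h1 : Φ (fun l : ℝ => if |l| ≤ (m:ℝ) then (1:ℂ) else 0)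
          (Φ (fun l : ℝ => ((Real.sqrt (2 * Real.pi * q) : ℝ) : ℂ) * ((Real.exp (-(q * l ^ 2) / 2) : ℝ) : ℂ)) x)
          = Φ ((fun l : ℝ => if |l| ≤ (m:ℝ) then (1:ℂ) else 0)
              * (fun l : ℝ => ((Real.sqrt (2 * Real.pi * q) : ℝ) : ℂ) * ((Real.exp (-(q * l ^ 2) / 2) : ℝ) : ℂ))) x := by
        rw [hmul]
        rfl
      rw [h1]
      apply phi_congr_apply
      intro l
      simp only [Pi.mul_apply]
      by_cases hl : l ∈ Set.Icc (-(m:ℝ)) (m:ℝ)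
      · show (ext Gc) l = _
        simp only [ext]
        rw [dif_pos hl]
        have hl' : |l| ≤ (m:ℝ) := abs_le.mpr (Set.mem_Icc.mp hl)
        rw [if_pos hl', one_mul]
        rfl
      · show (ext Gc) l = _
        simp only [ext]
        rw [dif_neg hl]
        have hl' : ¬ (|l| ≤ (m:ℝ)) := fun hc => hl (Set.mem_Icc.mpr (abs_le.mp hc))
        rw [if_neg hl', zero_mul]
    rw [s1]
    simp only [s2]
    rw [s3, hgI, s4]
  have tL := Pn_tendsto Φ hadd hsmul hmul hstar hone
    (∫ t : ℝ, Real.exp (-(t ^ 2) / (2 * q)) • Φ (fun lam : ℝ => Complex.exp (Complex.I * lam * t)) x)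
  have tR := Pn_tendsto Φ hadd hsmul hmul hstar hone
    (Φ (fun l : ℝ => ((Real.sqrt (2 * Real.pi * q) : ℝ) : ℂ) * ((Real.exp (-(q * l ^ 2) / 2) : ℝ) : ℂ)) x)
  exact tendsto_nhds_unique tL (tR.congr (fun m => (hmain m).symm))


end HeisenbergAux

open HeisenbergAux

/-- Quantitative bound for the Gaussian-averaged Heisenberg evolution on the ground
state. In the setting of the previous statement (self-adjoint `H` encoded by its Borel
functional calculus `Φ`, spectrum `S ⊆ {0} ∪ [ΔE, ∞)`, ground eigenprojection
`P({0}) = ⟨·,ψ₀⟩ψ₀`, bounded `A` with `⟨ψ₀, Aψ₀⟩ = 0`), if moreover the commutator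
`[H,A]` extends to a bounded operator `Cm` (encoded via the derivative of the
Heisenberg evolution) with `‖[H,A]ψ₀‖ ≤ K`, then
`‖Ãψ₀‖ ≤ K·(ΔE)⁻¹·e^{−(ΔE)²q/2}`. -/
theorem heisenberg_gaussian_average_norm_bound
    (Φ : (ℝ → ℂ) → (E →L[ℂ] E))
    (hadd : ∀ f g, Φ (f + g) = Φ f + Φ g)
    (hsmul : ∀ (c : ℂ) f, Φ (c • f) = c • Φ f)
    (hmul : ∀ f g, Φ (f * g) = Φ f * Φ g)
    (hstar : ∀ f, Φ (star f) = ContinuousLinearMap.adjoint (Φ f))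
    (hone : Φ 1 = 1)
    (S : Set ℝ) (hSmeas : MeasurableSet S)
    (hsupp : ∀ f g : ℝ → ℂ, Set.EqOn f g S → Φ f = Φ g)
    (ΔE : ℝ) (hΔE : 0 < ΔE) (hS : S ⊆ {0} ∪ Set.Ici ΔE) (h0S : (0 : ℝ) ∈ S)
    (ψ₀ : E) (hψ₀ : ‖ψ₀‖ = 1)
    (hGS : ∀ x : E, Φ (Set.indicator {(0 : ℝ)} 1) x = ⟪ψ₀, x⟫_ℂ • ψ₀)
    (A Cm : E →L[ℂ] E) (hA : ⟪ψ₀, A ψ₀⟫_ℂ = 0)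
    (hcomm : ∀ (ψ : E) (t : ℝ),
      HasDerivAt
        (fun τ => Φ (fun lam => Complex.exp (Complex.I * lam * τ))
          (A (Φ (fun lam => Complex.exp (-(Complex.I * lam * τ))) ψ)))
        (Φ (fun lam => Complex.exp (Complex.I * lam * t))
          (Complex.I • Cm (Φ (fun lam => Complex.exp (-(Complex.I * lam * t))) ψ))) t)
    (K : ℝ) (hK : ‖Cm ψ₀‖ ≤ K)
    (q : ℝ) (hq : 0 < q)
    (hInt : Integrable (fun t : ℝ =>
      Real.exp (-(t ^ 2) / (2 * q)) •
        (Φ (fun lam => Complex.exp (Complex.I * lam * t)) * A *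
          Φ (fun lam => Complex.exp (-(Complex.I * lam * t))))))
    (Atil : E →L[ℂ] E)
    (hAtil : Atil = ((Real.sqrt (2 * Real.pi * q) : ℂ))⁻¹ •
      ∫ t : ℝ, Real.exp (-(t ^ 2) / (2 * q)) •
        (Φ (fun lam => Complex.exp (Complex.I * lam * t)) * A *
          Φ (fun lam => Complex.exp (-(Complex.I * lam * t))))) :
    ‖Atil ψ₀‖ ≤ K * ΔE⁻¹ * Real.exp (-ΔE ^ 2 * q / 2) := by
  have hw := fun t => deriv_w Φ hsmul hmul ψ₀ hψ₀ hGS A Cm hcomm t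
  have hwc : Continuous (fun t : ℝ => Φ (fun lam : ℝ => Complex.exp (Complex.I * lam * t)) (A ψ₀)) := by
    rw [continuous_iff_continuousAt]
    intro t
    exact (hw t).continuousAt
  have hfix : ∀ t : ℝ, Φ (fun lam : ℝ => Complex.exp (-(Complex.I * lam * t))) ψ₀ = ψ₀ := by
    intro t
    rw [phi_eval Φ hsmul hmul ψ₀ hψ₀ hGS]
    norm_num
  have hApply : Atil ψ₀ = ((Real.sqrt (2 * Real.pi * q) : ℂ))⁻¹ •
      ∫ t : ℝ, Real.exp (-(t ^ 2) / (2 * q)) •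
        Φ (fun lam : ℝ => Complex.exp (Complex.I * lam * t)) (A ψ₀) := by
    rw [hAtil, ContinuousLinearMap.smul_apply]
    congr 1
    rw [ContinuousLinearMap.integral_apply hInt]
    congr 1
    funext t
    rw [ContinuousLinearMap.smul_apply]
    congr 1
    simp only [ContinuousLinearMap.mul_apply]
    rw [hfix t]
  have hexch := exchange Φ hadd hsmul hmul hstar hone S hsupp hq (A ψ₀) hwc
  have hc0 : ((Real.sqrt (2 * Real.pi * q) : ℝ) : ℂ) ≠ 0 := by
    rw [Complex.ofReal_ne_zero]
    exact (Real.sqrt_pos.mpr (by positivity)).ne'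
  have hAv : Atil ψ₀ = Φ (fun l : ℝ => ((Real.exp (-(q * l ^ 2) / 2) : ℝ) : ℂ)) (A ψ₀) := by
    rw [hApply, hexch]
    have h1 := congrArg (fun (T : E →L[ℂ] E) => T (A ψ₀))
      (hsmul (((Real.sqrt (2 * Real.pi * q) : ℝ) : ℂ))⁻¹
        (fun l : ℝ => ((Real.sqrt (2 * Real.pi * q) : ℝ) : ℂ) * ((Real.exp (-(q * l ^ 2) / 2) : ℝ) : ℂ)))
    simp only [ContinuousLinearMap.smul_apply] at h1
    rw [← h1]
    apply phi_congr_apply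
    intro l
    simp only [Pi.smul_apply, smul_eq_mul]
    rw [← mul_assoc, inv_mul_cancel₀ hc0, one_mul]
  have huveq := u_eq Φ hadd hsmul hmul hstar hone S hsupp ψ₀ hψ₀ hGS A Cm hcomm
  have hind : Φ (Set.indicator {(0:ℝ)} 1) (A ψ₀) = 0 := by
    rw [hGS, hA, zero_smul]
  have hsplit : Φ (fun l : ℝ => ((Real.exp (-(q * l ^ 2) / 2) : ℝ) : ℂ)) (A ψ₀)
      = Φ (fun l : ℝ => if l = 0 then 0 else ((l:ℂ))⁻¹ * ((Real.exp (-(q * l ^ 2) / 2) : ℝ) : ℂ)) (Cm ψ₀) := by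
    rw [huveq]
    have h2 : Φ (fun l : ℝ => if l = 0 then 0 else ((l:ℂ))⁻¹ * ((Real.exp (-(q * l ^ 2) / 2) : ℝ) : ℂ))
          (Φ (fun l : ℝ => (l:ℂ)) (A ψ₀))
        = Φ ((fun l : ℝ => if l = 0 then 0 else ((l:ℂ))⁻¹ * ((Real.exp (-(q * l ^ 2) / 2) : ℝ) : ℂ))
            * (fun l : ℝ => (l:ℂ))) (A ψ₀) := by
      rw [hmul]
      rfl
    rw [h2]
    have h3 : (fun l : ℝ => ((Real.exp (-(q * l ^ 2) / 2) : ℝ) : ℂ))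
        = (fun l : ℝ => if l = 0 then 0 else ((l:ℂ))⁻¹ * ((Real.exp (-(q * l ^ 2) / 2) : ℝ) : ℂ))
            * (fun l : ℝ => (l:ℂ)) + Set.indicator {(0:ℝ)} 1 := by
      funext l
      by_cases hl : l = 0
      · subst hl
        simp [Set.indicator_apply]
      · have hlne : ((l:ℝ):ℂ) ≠ 0 := by exact_mod_cast hl
        simp only [Pi.add_apply, Pi.mul_apply, if_neg hl,
          Set.indicator_apply, Set.mem_singleton_iff, hl, if_false, add_zero]
        field_simp
    rw [h3, hadd, ContinuousLinearMap.add_apply, hind, add_zero]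
  have hnorm : ‖Φ (fun l : ℝ => if l = 0 then 0 else ((l:ℂ))⁻¹ * ((Real.exp (-(q * l ^ 2) / 2) : ℝ) : ℂ)) (Cm ψ₀)‖
      ≤ (ΔE⁻¹ * Real.exp (-ΔE ^ 2 * q / 2)) * ‖Cm ψ₀‖ := by
    apply norm_apply_le Φ hadd hsmul hmul hstar hone S hsupp _ _ (by positivity)
    intro l hl
    rcases hS hl with h0 | hge
    · rw [Set.mem_singleton_iff] at h0
      subst h0
      simp only [↓reduceIte, norm_zero]
      positivity
    · rw [Set.mem_Ici] at hge
      have hlpos : 0 < l := lt_of_lt_of_le hΔE hge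
      rw [if_neg hlpos.ne', norm_mul, norm_inv, Complex.norm_real, Complex.norm_real,
        Real.norm_eq_abs, Real.norm_eq_abs,
        _root_.abs_of_pos hlpos, _root_.abs_of_pos (Real.exp_pos _)]
      apply mul_le_mul
      · exact inv_anti₀ hΔE hge
      · apply Real.exp_le_exp.mpr
        have h5 : ΔE ^ 2 ≤ l ^ 2 := by nlinarith
        nlinarith [mul_le_mul_of_nonneg_left h5 hq.le]
      · positivity
      · positivity
  rw [hAv, hsplit]
  calc ‖Φ (fun l : ℝ => if l = 0 then 0 else ((l:ℂ))⁻¹ * ((Real.exp (-(q * l ^ 2) / 2) : ℝ) : ℂ)) (Cm ψ₀)‖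
      ≤ (ΔE⁻¹ * Real.exp (-ΔE ^ 2 * q / 2)) * ‖Cm ψ₀‖ := hnorm
    _ ≤ (ΔE⁻¹ * Real.exp (-ΔE ^ 2 * q / 2)) * K := by
        apply mul_le_mul_of_nonneg_left hK (by positivity)
    _ = K * ΔE⁻¹ * Real.exp (-ΔE ^ 2 * q / 2) := by ring
end
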